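/- arXiv:1205.1088 — 3 statements merged into one kernel-verified Lean document; each statement's English description precedes it below -/
import Mathlib

section
/- Let $S \subset \mathbb{R}^3$ be a bounded measurable set with $\mu(S) > 0$, and suppose there exist $C, h_0 > 0$ such that $\mu(S \triangle (S+h)) \le C\|h\|$ for all $\|h\| < h_0$. Let $u \in L^2(\mathbb{R}^3 \times [0,T]; \mathbb{R}^3)$ satisfy $\|u(\cdot,t)\|_{L^\infty} \in L^2(0,T)$. Then for any two continuous curves $w^{(1)}, w^{(2)} : [0,T_0] \to \mathbb{R}^3$ with $T_0 \le T$ and any $t \in [0,T_0]$, $$\left\| \int_0^t \int_{S + w^{(1)}(\tau)} u(x,\tau)\,dx\,d\tau - \int_0^t \int_{S + w^{(2)}(\tau)} u(x,\tau)\,dx\,d\tau \right\| \le C \sqrt{T_0}\, \|\,\|u(\cdot,\cdot)\|_{L^\infty}\|_{L^2(0,T)} \, \sup_{\tau \in [0,T_0]} \|w^{(1)}(\tau) - w^{(2)}(\tau)\|,$$ provided $\|w^{(1)}(\tau) - w^{(2)}(\tau)\| < h_0$ for all $\tau$. -/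
open MeasureTheory

/-- Key estimate (3.4) of the paper: for a body set `S` satisfying the Lipschitz shift
condition and a velocity field `u` whose spatial sup-norm `g` is square integrable in time,
the difference of the averaged fluid velocities along two nearby curves `w₁, w₂` is
controlled by `C √T₀ ‖g‖_{L²(0,T)} · sup ‖w₁ - w₂‖`. -/
theorem averaged_velocity_difference_estimate
    (S : Set (EuclideanSpace ℝ (Fin 3))) (hSb : Bornology.IsBounded S)
    (hSm : MeasurableSet S) (hSpos : 0 < volume S)
    (C h0 T T0 : ℝ) (hC : 0 < C) (hh0 : 0 < h0) (hT0 : 0 < T0) (hT0T : T0 ≤ T)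
    (hshift : ∀ h : EuclideanSpace ℝ (Fin 3), ‖h‖ < h0 →
      volume (symmDiff S ((fun x => x + h) '' S)) ≤ ENNReal.ofReal (C * ‖h‖))
    (u : EuclideanSpace ℝ (Fin 3) → ℝ → EuclideanSpace ℝ (Fin 3))
    (hu : Measurable (Function.uncurry u))
    (g : ℝ → ℝ) (hgm : Measurable g)
    (hg : ∀ t ∈ Set.Icc (0:ℝ) T, ∀ x, ‖u x t‖ ≤ g t)
    (hgL2 : IntegrableOn (fun t => (g t) ^ 2) (Set.Icc (0:ℝ) T))
    (w1 w2 : ℝ → EuclideanSpace ℝ (Fin 3))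
    (hw1 : ContinuousOn w1 (Set.Icc 0 T0)) (hw2 : ContinuousOn w2 (Set.Icc 0 T0))
    (hclose : ∀ τ ∈ Set.Icc (0:ℝ) T0, ‖w1 τ - w2 τ‖ < h0)
    (M : ℝ) (hM : ∀ τ ∈ Set.Icc (0:ℝ) T0, ‖w1 τ - w2 τ‖ ≤ M)
    (t : ℝ) (ht : t ∈ Set.Icc (0:ℝ) T0) :
    ‖(∫ τ in Set.Icc (0:ℝ) t, ∫ x in (fun y => y + w1 τ) '' S, u x τ) -
        ∫ τ in Set.Icc (0:ℝ) t, ∫ x in (fun y => y + w2 τ) '' S, u x τ‖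
      ≤ C * Real.sqrt T0 * Real.sqrt (∫ τ in Set.Icc (0:ℝ) T, (g τ) ^ 2) * M := by
  obtain ⟨ht0, htT0⟩ := ht
  have hM0 : 0 ≤ M := le_trans (norm_nonneg _) (hM 0 ⟨le_refl 0, le_of_lt hT0⟩)
  have hCM0 : 0 ≤ C * M := mul_nonneg hC.le hM0
  have hsub1 : Set.Icc (0:ℝ) t ⊆ Set.Icc 0 T0 := Set.Icc_subset_Icc le_rfl htT0
  have hsub2 : Set.Icc (0:ℝ) T0 ⊆ Set.Icc 0 T := Set.Icc_subset_Icc le_rfl hT0T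
  have hsub3 : Set.Icc (0:ℝ) t ⊆ Set.Icc 0 T := hsub1.trans hsub2
  have himgm : ∀ (a : EuclideanSpace ℝ (Fin 3)) (s : Set (EuclideanSpace ℝ (Fin 3))),
      MeasurableSet s → MeasurableSet ((fun y => y + a) '' s) := fun a s hs =>
    (MeasurableEquiv.addRight a).measurableEmbedding.measurableSet_image.2 hs
  have himgv : ∀ (a : EuclideanSpace ℝ (Fin 3)) (s : Set (EuclideanSpace ℝ (Fin 3))),
      volume ((fun y => y + a) '' s) = volume s := by
    intro a s
    rw [show (fun y => y + a) '' s = (· + (-a)) ⁻¹' s from Set.image_add_right]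
    exact measure_preimage_add_right volume (-a) s
  have hSfin : volume S < ⊤ := hSb.measure_lt_top
  have hgnn : ∀ τ ∈ Set.Icc (0:ℝ) T, 0 ≤ g τ := fun τ hτ =>
    le_trans (norm_nonneg _) (hg τ hτ 0)
  -- integrability of g
  have hgInt : IntegrableOn g (Set.Icc (0:ℝ) T) := by
    have hconst : IntegrableOn (fun _ : ℝ => (1:ℝ)) (Set.Icc (0:ℝ) T) :=
      integrableOn_const measure_Icc_lt_top.ne
    refine Integrable.mono' ((hgL2.add hconst).div_const 2)
      hgm.aestronglyMeasurable (ae_of_all _ fun τ => ?_)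
    simp only [Real.norm_eq_abs, Pi.add_apply]
    nlinarith [sq_nonneg (|g τ| - 1), sq_abs (g τ)]
  have hgInt_t : IntegrableOn g (Set.Icc (0:ℝ) t) := hgInt.mono_set hsub3
  -- measurable a.e.-versions of the curves
  obtain ⟨v1, hv1m, hv1e⟩ := hw1.aemeasurable measurableSet_Icc
  obtain ⟨v2, hv2m, hv2e⟩ := hw2.aemeasurable measurableSet_Icc
  have hv1e' : ∀ᵐ τ ∂(volume.restrict (Set.Icc (0:ℝ) t)), w1 τ = v1 τ :=
    ae_restrict_of_ae_restrict_of_subset hsub1 hv1e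
  have hv2e' : ∀ᵐ τ ∂(volume.restrict (Set.Icc (0:ℝ) t)), w2 τ = v2 τ :=
    ae_restrict_of_ae_restrict_of_subset hsub1 hv2e
  have hum : ∀ τ : ℝ, Measurable (fun x => u x τ) := fun τ =>
    hu.comp (measurable_id.prodMk measurable_const)
  -- change of variables for the inner integral
  have hcov : ∀ (a : EuclideanSpace ℝ (Fin 3)) (τ : ℝ),
      ∫ x in (fun y => y + a) '' S, u x τ = ∫ x in S, u (x + a) τ := fun a τ =>
    (measurePreserving_add_right volume a).setIntegral_image_emb
      (MeasurableEquiv.addRight a).measurableEmbedding _ _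
  -- the core pointwise-in-time bound
  have hbound : ∀ τ ∈ Set.Icc (0:ℝ) t,
      ‖(∫ x in (fun y => y + w1 τ) '' S, u x τ) -
        ∫ x in (fun y => y + w2 τ) '' S, u x τ‖ ≤ g τ * (C * M) := by
    intro τ hτ
    have hτT : τ ∈ Set.Icc (0:ℝ) T := hsub3 hτ
    have hτT0 : τ ∈ Set.Icc (0:ℝ) T0 := hsub1 hτ
    set S1 := (fun y => y + w1 τ) '' S with hS1
    set S2 := (fun y => y + w2 τ) '' S with hS2
    have hS1m : MeasurableSet S1 := himgm _ _ hSm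
    have hS2m : MeasurableSet S2 := himgm _ _ hSm
    have hS1v : volume S1 = volume S := himgv _ _
    have hS2v : volume S2 = volume S := himgv _ _
    have hfin12 : volume (S1 ∪ S2) < ⊤ :=
      lt_of_le_of_lt (measure_union_le _ _)
        (by rw [hS1v, hS2v]; exact ENNReal.add_lt_top.2 ⟨hSfin, hSfin⟩)
    have hfi : ∀ s, s ⊆ S1 ∪ S2 → volume s < ⊤ → IntegrableOn (fun x => u x τ) s := by
      intro s hss hsfin
      exact Integrable.mono' (integrableOn_const hsfin.ne)
        (hum τ).aestronglyMeasurable (ae_of_all _ fun x => hg τ hτT x)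
    have hfin1 : volume (S1 \ S2) < ⊤ :=
      lt_of_le_of_lt (measure_mono (Set.diff_subset.trans Set.subset_union_left)) hfin12
    have hfin2 : volume (S2 \ S1) < ⊤ :=
      lt_of_le_of_lt (measure_mono (Set.diff_subset.trans Set.subset_union_right)) hfin12
    have hfinI : volume (S1 ∩ S2) < ⊤ :=
      lt_of_le_of_lt (measure_mono (Set.inter_subset_left.trans Set.subset_union_left)) hfin12
    have hu1 : ∫ x in S1, u x τ = (∫ x in S1 \ S2, u x τ) + ∫ x in S1 ∩ S2, u x τ := by
      rw [← setIntegral_union (Set.disjoint_sdiff_left.mono_right Set.inter_subset_right)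
        (hS1m.inter hS2m)
        (hfi _ ((Set.diff_subset).trans Set.subset_union_left) hfin1)
        (hfi _ (Set.inter_subset_left.trans Set.subset_union_left) hfinI),
        Set.diff_union_inter]
    have hu2 : ∫ x in S2, u x τ = (∫ x in S2 \ S1, u x τ) + ∫ x in S2 ∩ S1, u x τ := by
      rw [← setIntegral_union (Set.disjoint_sdiff_left.mono_right Set.inter_subset_right)
        (hS2m.inter hS1m)
        (hfi _ ((Set.diff_subset).trans Set.subset_union_right) hfin2)
        (hfi _ (Set.inter_subset_left.trans Set.subset_union_right)
          (lt_of_le_of_lt (measure_mono (Set.inter_subset_left.trans Set.subset_union_right))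
            hfin12)),
        Set.diff_union_inter]
    have hdiffeq : (∫ x in S1, u x τ) - ∫ x in S2, u x τ
        = (∫ x in S1 \ S2, u x τ) - ∫ x in S2 \ S1, u x τ := by
      rw [hu1, hu2, Set.inter_comm S2 S1]; abel
    have hb1 : ‖∫ x in S1 \ S2, u x τ‖ ≤ g τ * (volume (S1 \ S2)).toReal :=
      norm_setIntegral_le_of_norm_le_const hfin1 (fun x _ => hg τ hτT x)
    have hb2 : ‖∫ x in S2 \ S1, u x τ‖ ≤ g τ * (volume (S2 \ S1)).toReal :=
      norm_setIntegral_le_of_norm_le_const hfin2 (fun x _ => hg τ hτT x)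
    -- symmetric difference volume bound
    have hsdv : volume (S1 \ S2) + volume (S2 \ S1) ≤ ENNReal.ofReal (C * M) := by
      have hunion : volume (S1 \ S2) + volume (S2 \ S1) = volume (symmDiff S1 S2) := by
        rw [Set.symmDiff_def, measure_union (disjoint_sdiff_sdiff) (hS2m.diff hS1m)]
      have himg : symmDiff S1 S2
          = (fun y => y + w1 τ) '' (symmDiff S ((fun x => x + (w2 τ - w1 τ)) '' S)) := by
        rw [Set.image_symmDiff (add_left_injective (w1 τ))]
        congr 1
        rw [Set.image_image]
        have : (fun x => x + (w2 τ - w1 τ) + w1 τ) = fun x => x + w2 τ := by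
          funext x; rw [add_assoc, sub_add_cancel]
        rw [this]
      have hnorm : ‖w2 τ - w1 τ‖ = ‖w1 τ - w2 τ‖ := norm_sub_rev _ _
      have hlt : ‖w2 τ - w1 τ‖ < h0 := by rw [hnorm]; exact hclose τ hτT0
      calc volume (S1 \ S2) + volume (S2 \ S1) = volume (symmDiff S1 S2) := hunion
        _ = volume (symmDiff S ((fun x => x + (w2 τ - w1 τ)) '' S)) := by
            rw [himg, himgv]
        _ ≤ ENNReal.ofReal (C * ‖w2 τ - w1 τ‖) := hshift _ hlt
        _ ≤ ENNReal.ofReal (C * M) := by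
            refine ENNReal.ofReal_le_ofReal ?_
            rw [hnorm]
            exact mul_le_mul_of_nonneg_left (hM τ hτT0) hC.le
    have hsdv' : (volume (S1 \ S2)).toReal + (volume (S2 \ S1)).toReal ≤ C * M := by
      rw [← ENNReal.toReal_add hfin1.ne hfin2.ne]
      exact ENNReal.toReal_le_of_le_ofReal hCM0 hsdv
    calc ‖(∫ x in S1, u x τ) - ∫ x in S2, u x τ‖
        = ‖(∫ x in S1 \ S2, u x τ) - ∫ x in S2 \ S1, u x τ‖ := by rw [hdiffeq]
      _ ≤ ‖∫ x in S1 \ S2, u x τ‖ + ‖∫ x in S2 \ S1, u x τ‖ := norm_sub_le _ _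
      _ ≤ g τ * (volume (S1 \ S2)).toReal + g τ * (volume (S2 \ S1)).toReal :=
          add_le_add hb1 hb2
      _ = g τ * ((volume (S1 \ S2)).toReal + (volume (S2 \ S1)).toReal) := by ring
      _ ≤ g τ * (C * M) := mul_le_mul_of_nonneg_left hsdv' (hgnn τ hτT)
  -- measurable versions of the averaged velocities
  set A' : ℝ → EuclideanSpace ℝ (Fin 3) := fun τ => ∫ x in S, u (x + v1 τ) τ with hA'def
  set B' : ℝ → EuclideanSpace ℝ (Fin 3) := fun τ => ∫ x in S, u (x + v2 τ) τ with hB'def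
  have hA'sm : StronglyMeasurable A' := by
    have hm : StronglyMeasurable
        (fun p : ℝ × EuclideanSpace ℝ (Fin 3) => u (p.2 + v1 p.1) p.1) :=
      (hu.comp ((measurable_snd.add (hv1m.comp measurable_fst)).prodMk
        measurable_fst)).stronglyMeasurable
    exact hm.integral_prod_right'
  have hB'sm : StronglyMeasurable B' := by
    have hm : StronglyMeasurable
        (fun p : ℝ × EuclideanSpace ℝ (Fin 3) => u (p.2 + v2 p.1) p.1) :=
      (hu.comp ((measurable_snd.add (hv2m.comp measurable_fst)).prodMk
        measurable_fst)).stronglyMeasurable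
    exact hm.integral_prod_right'
  have hinm : ∀ (a : EuclideanSpace ℝ (Fin 3)) (τ : ℝ),
      Measurable (fun x => u (x + a) τ) := fun a τ =>
    (hum τ).comp (measurable_add_const a)
  have hA'norm : ∀ᵐ τ ∂(volume.restrict (Set.Icc (0:ℝ) t)),
      ‖A' τ‖ ≤ g τ * (volume S).toReal := by
    filter_upwards [ae_restrict_mem measurableSet_Icc] with τ hτ
    exact norm_setIntegral_le_of_norm_le_const hSfin (fun x _ => hg τ (hsub3 hτ) _)
  have hB'norm : ∀ᵐ τ ∂(volume.restrict (Set.Icc (0:ℝ) t)),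
      ‖B' τ‖ ≤ g τ * (volume S).toReal := by
    filter_upwards [ae_restrict_mem measurableSet_Icc] with τ hτ
    exact norm_setIntegral_le_of_norm_le_const hSfin (fun x _ => hg τ (hsub3 hτ) _)
  have hA'int : Integrable A' (volume.restrict (Set.Icc (0:ℝ) t)) :=
    Integrable.mono' (hgInt_t.mul_const _) hA'sm.aestronglyMeasurable hA'norm
  have hB'int : Integrable B' (volume.restrict (Set.Icc (0:ℝ) t)) :=
    Integrable.mono' (hgInt_t.mul_const _) hB'sm.aestronglyMeasurable hB'norm
  have hAeq : (∫ τ in Set.Icc (0:ℝ) t, ∫ x in (fun y => y + w1 τ) '' S, u x τ)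
      = ∫ τ in Set.Icc (0:ℝ) t, A' τ := by
    refine integral_congr_ae ?_
    filter_upwards [hv1e'] with τ hτ
    rw [hcov (w1 τ) τ, hτ]
  have hBeq : (∫ τ in Set.Icc (0:ℝ) t, ∫ x in (fun y => y + w2 τ) '' S, u x τ)
      = ∫ τ in Set.Icc (0:ℝ) t, B' τ := by
    refine integral_congr_ae ?_
    filter_upwards [hv2e'] with τ hτ
    rw [hcov (w2 τ) τ, hτ]
  rw [hAeq, hBeq, ← integral_sub hA'int hB'int]
  have hstep : ‖∫ τ in Set.Icc (0:ℝ) t, (A' τ - B' τ)‖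
      ≤ ∫ τ in Set.Icc (0:ℝ) t, g τ * (C * M) := by
    refine norm_integral_le_of_norm_le (hgInt_t.mul_const _) ?_
    filter_upwards [hv1e', hv2e', ae_restrict_mem measurableSet_Icc] with τ h1 h2 hτ
    have hb := hbound τ hτ
    rw [hcov (w1 τ) τ, hcov (w2 τ) τ, h1, h2] at hb
    exact hb
  -- Cauchy–Schwarz in time
  have hfinIcc : IsFiniteMeasure (volume.restrict (Set.Icc (0:ℝ) t)) :=
    ⟨by rw [Measure.restrict_apply_univ]; exact measure_Icc_lt_top⟩
  have hrpow2 : ∀ x : ℝ, x ^ (2:ℝ) = x ^ 2 := fun x => by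
    rw [show (2:ℝ) = ((2:ℕ):ℝ) by norm_num, Real.rpow_natCast]
  have hCS : ∫ τ in Set.Icc (0:ℝ) t, g τ
      ≤ Real.sqrt T0 * Real.sqrt (∫ τ in Set.Icc (0:ℝ) T, (g τ) ^ 2) := by
    have hpq : Real.HolderConjugate 2 2 := Real.HolderConjugate.two_two
    have h2 : (ENNReal.ofReal (2:ℝ)) = 2 := by
      rw [ENNReal.ofReal_ofNat]
    have hone : MemLp (fun _ : ℝ => (1:ℝ)) (ENNReal.ofReal (2:ℝ))
        (volume.restrict (Set.Icc (0:ℝ) t)) := memLp_const 1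
    have hgl2t : MemLp g (ENNReal.ofReal (2:ℝ)) (volume.restrict (Set.Icc (0:ℝ) t)) := by
      rw [h2]
      exact (memLp_two_iff_integrable_sq hgm.aestronglyMeasurable).2 (hgL2.mono_set hsub3)
    have hH := integral_mul_le_Lp_mul_Lq_of_nonneg hpq
      (ae_of_all _ fun τ => zero_le_one)
      (by filter_upwards [ae_restrict_mem measurableSet_Icc] with τ hτ
          exact hgnn τ (hsub3 hτ))
      hone hgl2t
    simp only [one_mul, Real.one_rpow] at hH
    have hmeas : (volume.restrict (Set.Icc (0:ℝ) t)) Set.univ = ENNReal.ofReal t := by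
      rw [Measure.restrict_apply_univ, Real.volume_Icc, sub_zero]
    have hconst : ∫ _ in Set.Icc (0:ℝ) t, (1:ℝ) = t := by
      rw [integral_const, smul_eq_mul, mul_one, Measure.real, hmeas, ENNReal.toReal_ofReal ht0]
    rw [hconst] at hH
    have hsq : (∫ τ in Set.Icc (0:ℝ) t, g τ ^ (2:ℝ)) = ∫ τ in Set.Icc (0:ℝ) t, g τ ^ 2 := by
      refine integral_congr_ae (ae_of_all _ fun τ => ?_)
      exact hrpow2 (g τ)
    rw [hsq] at hH
    have hmono : (∫ τ in Set.Icc (0:ℝ) t, (g τ) ^ 2)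
        ≤ ∫ τ in Set.Icc (0:ℝ) T, (g τ) ^ 2 :=
      setIntegral_mono_set hgL2 (ae_of_all _ fun τ => sq_nonneg (g τ))
        (HasSubset.Subset.eventuallyLE hsub3)
    calc ∫ τ in Set.Icc (0:ℝ) t, g τ
        ≤ t ^ (1/(2:ℝ)) * (∫ τ in Set.Icc (0:ℝ) t, (g τ) ^ 2) ^ (1/(2:ℝ)) := hH
      _ = Real.sqrt t * Real.sqrt (∫ τ in Set.Icc (0:ℝ) t, (g τ) ^ 2) := by
          rw [Real.sqrt_eq_rpow, Real.sqrt_eq_rpow]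
      _ ≤ Real.sqrt T0 * Real.sqrt (∫ τ in Set.Icc (0:ℝ) T, (g τ) ^ 2) := by
          refine mul_le_mul (Real.sqrt_le_sqrt htT0) (Real.sqrt_le_sqrt hmono)
            (Real.sqrt_nonneg _) (Real.sqrt_nonneg _)
  calc ‖∫ τ in Set.Icc (0:ℝ) t, (A' τ - B' τ)‖
      ≤ ∫ τ in Set.Icc (0:ℝ) t, g τ * (C * M) := hstep
    _ = (∫ τ in Set.Icc (0:ℝ) t, g τ) * (C * M) := by rw [integral_mul_const]
    _ ≤ (Real.sqrt T0 * Real.sqrt (∫ τ in Set.Icc (0:ℝ) T, (g τ) ^ 2)) * (C * M) :=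
        mul_le_mul_of_nonneg_right hCS hCM0
    _ = C * Real.sqrt T0 * Real.sqrt (∫ τ in Set.Icc (0:ℝ) T, (g τ) ^ 2) * M := by ring
end

section
/- Let $S \subset \mathbb{R}^3$ be bounded measurable with $m = \mu(S) > 0$ satisfying the Lipschitz shift condition: $\mu(S \triangle (S+h)) \le C\|h\|$ for $\|h\| < h_0$. Let $u$ satisfy $\|u\|_{L^2(0,T;L^\infty)} < \infty$ and $\|u\|_{L^2(Q_T)} < \infty$. If $T_0 \in (0, T]$ satisfies $T_0 < \min\{ m h_0^2 / (4\|u\|^2_{L^2(Q_T)}),\ m^2/(C^2 \|u\|^2_{L^2(0,T;L^\infty)}) \}$, then for each $z_0 \in \mathbb{R}^3$ the integral equation $$w(t) = z_0 + \frac{1}{m} \int_0^t \int_{S + w(\tau)} u(x,\tau)\,dx\,d\tau$$ has a unique solution $w \in C([0,T_0]; \mathbb{R}^3)$ with $\sup_t \|w(t) - z_0\| \le h_0/2$. -/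
open MeasureTheory

noncomputable section DPaux

local notation "E3" => EuclideanSpace ℝ (Fin 3)

lemma dp_cs_sqrt {α : Type*} [MeasurableSpace α] (μ : Measure α) [IsFiniteMeasure μ]
    {f : α → ℝ} (hnn : 0 ≤ᵐ[μ] f) (hfm : AEStronglyMeasurable f μ)
    (hf2 : Integrable (fun x => f x ^ 2) μ) :
    ∫ x, f x ∂μ ≤ Real.sqrt (μ Set.univ).toReal * Real.sqrt (∫ x, f x ^ 2 ∂μ) := by
  have hconj : Real.HolderConjugate 2 2 := Real.holderConjugate_iff.2 ⟨one_lt_two, by norm_num⟩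
  have h1 : MemLp (fun _ : α => (1:ℝ)) (ENNReal.ofReal 2) μ := memLp_const 1
  have h2 : MemLp f (ENNReal.ofReal 2) μ := by
    rw [show ENNReal.ofReal 2 = 2 by norm_num]
    exact (memLp_two_iff_integrable_sq hfm).2 hf2
  have key := integral_mul_le_Lp_mul_Lq_of_nonneg hconj
    (Filter.Eventually.of_forall fun _ => zero_le_one) hnn h1 h2
  simp only [one_mul] at key
  have e1 : ∫ a, (1:ℝ) ^ (2:ℝ) ∂μ = (μ Set.univ).toReal := by
    simp [Real.one_rpow, measureReal_def]
  have e2 : ∀ a, f a ^ (2:ℝ) = f a ^ 2 := fun a => by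
    rw [show ((2:ℝ)) = ((2:ℕ):ℝ) by norm_num, Real.rpow_natCast]
  simp only [e2, e1] at key
  calc ∫ x, f x ∂μ ≤ (μ Set.univ).toReal ^ (1/(2:ℝ)) * (∫ a, f a ^ 2 ∂μ) ^ (1/(2:ℝ)) := key
    _ = Real.sqrt (μ Set.univ).toReal * Real.sqrt (∫ x, f x ^ 2 ∂μ) := by
        rw [Real.sqrt_eq_rpow, Real.sqrt_eq_rpow]

lemma dp_translate_integral (S : Set E3) (a : E3) (f : E3 → E3) :
    ∫ x in (fun y => y + a) '' S, f x = ∫ y in S, f (y + a) :=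
  (measurePreserving_add_right volume a).setIntegral_image_emb
    (measurableEmbedding_addRight a) f S

lemma dp_translate_measure (A : Set E3) (a : E3) :
    volume ((fun y => y + a) '' A) = volume A := by
  have h1 := (measurePreserving_add_right (volume : Measure E3) a).map_eq
  calc volume ((fun y => y + a) '' A)
      = (Measure.map (fun y => y + a) volume) ((fun y => y + a) '' A) := by rw [h1]
    _ = volume ((fun y => y + a) ⁻¹' ((fun y => y + a) '' A)) :=
        (measurableEmbedding_addRight a).map_apply _ _
    _ = volume A := by rw [Set.preimage_image_eq A (add_left_injective a)]

lemma dp_symmDiff_translate (S : Set E3) (a b : E3) :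
    symmDiff ((fun y => y + a) '' S) ((fun y => y + b) '' S)
      = (fun y => y + a) '' (symmDiff S ((fun y => y + (b - a)) '' S)) := by
  rw [Set.image_symmDiff (add_left_injective a), Set.image_image,
    show (fun x : E3 => x + (b - a) + a) = fun y => y + b from
      funext fun y => by rw [add_assoc, sub_add_cancel]]






lemma dp_shift2 (S : Set E3) (C h0 : ℝ) (hC : 0 < C) (hh0 : 0 < h0)
    (hshift : ∀ h : E3, ‖h‖ < h0 →
      volume (symmDiff S ((fun x => x + h) '' S)) ≤ ENNReal.ofReal (C * ‖h‖)) :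
    ∀ h : E3, ‖h‖ ≤ h0 →
      volume (symmDiff S ((fun x => x + h) '' S)) ≤ ENNReal.ofReal (C * ‖h‖) := by
  intro h hh
  set c : E3 := (2:ℝ)⁻¹ • h with hc
  have hnc : ‖c‖ = ‖h‖ / 2 := by
    rw [hc, norm_smul, norm_inv, Real.norm_ofNat]; ring
  have hclt : ‖c‖ < h0 := by
    rw [hnc]; nlinarith [norm_nonneg h]
  have hsum : c + c = h := by rw [hc, ← add_smul]; norm_num
  have hhc : h - c = c := sub_eq_iff_eq_add.2 (by rw [hsum])
  have tri : symmDiff S ((fun x => x + h) '' S) ⊆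
      symmDiff S ((fun x => x + c) '' S) ∪
        symmDiff ((fun x => x + c) '' S) ((fun x => x + h) '' S) :=
    symmDiff_triangle _ _ _
  have h2 : volume (symmDiff ((fun x => x + c) '' S) ((fun x => x + h) '' S))
      = volume (symmDiff S ((fun x => x + c) '' S)) := by
    rw [dp_symmDiff_translate, dp_translate_measure, hhc]
  calc volume (symmDiff S ((fun x => x + h) '' S))
      ≤ volume (symmDiff S ((fun x => x + c) '' S)) +
          volume (symmDiff ((fun x => x + c) '' S) ((fun x => x + h) '' S)) :=
        le_trans (measure_mono tri) (measure_union_le _ _)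
    _ = volume (symmDiff S ((fun x => x + c) '' S)) +
          volume (symmDiff S ((fun x => x + c) '' S)) := by rw [h2]
    _ ≤ ENNReal.ofReal (C * ‖c‖) + ENNReal.ofReal (C * ‖c‖) :=
        add_le_add (hshift c hclt) (hshift c hclt)
    _ = ENNReal.ofReal (C * ‖h‖) := by
        rw [← ENNReal.ofReal_add (by positivity) (by positivity), hnc]; ring_nf

-- strong measurability of τ ↦ ∫_{S + v τ} u(·,τ)
lemma dp_bodyInt_sm (S : Set E3) (hSm : MeasurableSet S)
    (u : E3 → ℝ → E3) (hu : Measurable (Function.uncurry u))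
    (v : ℝ → E3) (hv : Measurable v) :
    StronglyMeasurable (fun τ => ∫ x in (fun y => y + v τ) '' S, u x τ) := by
  have heq : (fun τ => ∫ x in (fun y => y + v τ) '' S, u x τ)
      = fun τ => ∫ y, Set.indicator S (fun y' => u (y' + v τ) τ) y := by
    funext τ
    rw [dp_translate_integral, integral_indicator hSm]
  rw [heq]
  have hm : StronglyMeasurable
      (Function.uncurry fun (τ:ℝ) (y:E3) => Set.indicator S (fun y' => u (y' + v τ) τ) y) := by
    apply Measurable.stronglyMeasurable
    have hset : MeasurableSet {p : ℝ × E3 | p.2 ∈ S} := measurable_snd hSm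
    have : (Function.uncurry fun (τ:ℝ) (y:E3) => Set.indicator S (fun y' => u (y' + v τ) τ) y)
        = Set.indicator {p : ℝ × E3 | p.2 ∈ S} (fun p => u (p.2 + v p.1) p.1) := by
      funext p
      by_cases hp : p.2 ∈ S <;>
        simp [Function.uncurry, Set.indicator, hp]
    rw [this]
    exact Measurable.indicator
      (hu.comp ((measurable_snd.add (hv.comp measurable_fst)).prodMk measurable_fst)) hset
  exact hm.integral_prod_right

-- uniform bound
lemma dp_bodyInt_le_const (S : Set E3) (hSb : Bornology.IsBounded S)
    (u : E3 → ℝ → E3) (a : E3) (τ gτ : ℝ) (hb : ∀ x, ‖u x τ‖ ≤ gτ) :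
    ‖∫ x in (fun y => y + a) '' S, u x τ‖ ≤ gτ * (volume S).toReal := by
  have hA : volume ((fun y => y + a) '' S) < ⊤ := by
    rw [dp_translate_measure]; exact hSb.measure_lt_top
  have := norm_setIntegral_le_of_norm_le_const_ae (μ := volume)
    (s := (fun y => y + a) '' S) (f := fun x => u x τ) hA
    (Filter.Eventually.of_forall fun x => hb x)
  rwa [measureReal_def, dp_translate_measure] at this

-- Cauchy–Schwarz bound in space
lemma dp_bodyInt_cs (S : Set E3) (hSb : Bornology.IsBounded S)
    (u : E3 → ℝ → E3) (hu : Measurable (Function.uncurry u)) (a : E3) (τ : ℝ)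
    (hint : Integrable (fun x => ‖u x τ‖ ^ 2)) :
    ‖∫ x in (fun y => y + a) '' S, u x τ‖ ≤
      Real.sqrt (volume S).toReal * Real.sqrt (∫ x, ‖u x τ‖ ^ 2) := by
  set A := (fun y => y + a) '' S with hA
  have hAv : volume A = volume S := dp_translate_measure S a
  have hAfin : volume A < ⊤ := by rw [hAv]; exact hSb.measure_lt_top
  haveI : IsFiniteMeasure (volume.restrict A) :=
    ⟨by rwa [Measure.restrict_apply_univ]⟩
  have hum : Measurable fun x => u x τ :=
    hu.comp (measurable_id.prodMk measurable_const)
  have h1 : ‖∫ x in A, u x τ‖ ≤ ∫ x in A, ‖u x τ‖ :=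
    norm_integral_le_integral_norm _
  have h2 : ∫ x in A, ‖u x τ‖ ≤
      Real.sqrt ((volume.restrict A) Set.univ).toReal * Real.sqrt (∫ x in A, ‖u x τ‖ ^ 2) :=
    dp_cs_sqrt (volume.restrict A)
      (Filter.Eventually.of_forall fun x => norm_nonneg _)
      hum.norm.aestronglyMeasurable hint.integrableOn
  have h3 : ((volume.restrict A) Set.univ).toReal = (volume S).toReal := by
    rw [Measure.restrict_apply_univ, hAv]
  have h4 : ∫ x in A, ‖u x τ‖ ^ 2 ≤ ∫ x, ‖u x τ‖ ^ 2 :=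
    setIntegral_le_integral hint
      (Filter.Eventually.of_forall fun x => by positivity)
  calc ‖∫ x in A, u x τ‖ ≤ ∫ x in A, ‖u x τ‖ := h1
    _ ≤ Real.sqrt ((volume.restrict A) Set.univ).toReal * Real.sqrt (∫ x in A, ‖u x τ‖ ^ 2) := h2
    _ ≤ Real.sqrt (volume S).toReal * Real.sqrt (∫ x, ‖u x τ‖ ^ 2) := by
        rw [h3]
        exact mul_le_mul_of_nonneg_left (Real.sqrt_le_sqrt h4) (Real.sqrt_nonneg _)

lemma dp_bodyInt_diff (S : Set E3) (hSb : Bornology.IsBounded S) (hSm : MeasurableSet S)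
    (u : E3 → ℝ → E3) (hu : Measurable (Function.uncurry u))
    (C h0 : ℝ) (hC : 0 < C) (hh0 : 0 < h0)
    (hshift : ∀ h : E3, ‖h‖ < h0 →
      volume (symmDiff S ((fun x => x + h) '' S)) ≤ ENNReal.ofReal (C * ‖h‖))
    (a b : E3) (hab : ‖b - a‖ ≤ h0) (τ gτ : ℝ) (hgnn : 0 ≤ gτ)
    (hb : ∀ x, ‖u x τ‖ ≤ gτ) :
    ‖(∫ x in (fun y => y + a) '' S, u x τ) - ∫ x in (fun y => y + b) '' S, u x τ‖
      ≤ gτ * (C * ‖b - a‖) := by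
  set A := (fun y => y + a) '' S with hA
  set B := (fun y => y + b) '' S with hB
  have hAm : MeasurableSet A := (measurableEmbedding_addRight a).measurableSet_image.2 hSm
  have hBm : MeasurableSet B := (measurableEmbedding_addRight b).measurableSet_image.2 hSm
  have hAfin : volume A < ⊤ := by rw [hA, dp_translate_measure]; exact hSb.measure_lt_top
  have hBfin : volume B < ⊤ := by rw [hB, dp_translate_measure]; exact hSb.measure_lt_top
  have hum : Measurable fun x => u x τ := hu.comp (measurable_id.prodMk measurable_const)
  have hIntOn : ∀ D : Set E3, volume D < ⊤ → IntegrableOn (fun x => u x τ) D := by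
    intro D hD
    haveI : IsFiniteMeasure (volume.restrict D) := ⟨by rwa [Measure.restrict_apply_univ]⟩
    exact Integrable.mono' (integrable_const gτ) hum.aestronglyMeasurable
      (Filter.Eventually.of_forall fun x => hb x)
  have hdA : ∫ x in A \ (A ∩ B), u x τ = (∫ x in A, u x τ) - ∫ x in A ∩ B, u x τ :=
    integral_diff (hAm.inter hBm) (hIntOn A hAfin) Set.inter_subset_left
  have hdB : ∫ x in B \ (A ∩ B), u x τ = (∫ x in B, u x τ) - ∫ x in A ∩ B, u x τ := by
    rw [Set.inter_comm] at *
    exact integral_diff (hBm.inter hAm) (hIntOn B hBfin) Set.inter_subset_left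
  have hAd : A \ (A ∩ B) = A \ B := Set.diff_self_inter
  have hBd : B \ (A ∩ B) = B \ A := by rw [Set.inter_comm]; exact Set.diff_self_inter
  have key : (∫ x in A, u x τ) - ∫ x in B, u x τ
      = (∫ x in A \ B, u x τ) - ∫ x in B \ A, u x τ := by
    rw [← hAd, ← hBd, hdA, hdB]; abel
  have bd1 : ‖∫ x in A \ B, u x τ‖ ≤ gτ * (volume (A \ B)).toReal :=
    norm_setIntegral_le_of_norm_le_const_ae
      (lt_of_le_of_lt (measure_mono Set.diff_subset) hAfin)
      (Filter.Eventually.of_forall fun x => hb x)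
  have bd2 : ‖∫ x in B \ A, u x τ‖ ≤ gτ * (volume (B \ A)).toReal :=
    norm_setIntegral_le_of_norm_le_const_ae
      (lt_of_le_of_lt (measure_mono Set.diff_subset) hBfin)
      (Filter.Eventually.of_forall fun x => hb x)
  have hsd : volume (symmDiff A B) = volume (A \ B) + volume (B \ A) := by
    rw [Set.symmDiff_def]
    exact measure_union (disjoint_sdiff_sdiff) (hBm.diff hAm)
  have hsdval : volume (symmDiff A B) ≤ ENNReal.ofReal (C * ‖b - a‖) := by
    rw [hA, hB, dp_symmDiff_translate, dp_translate_measure]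
    exact dp_shift2 S C h0 hC hh0 hshift (b - a) hab
  have hfin1 : volume (A \ B) ≠ ⊤ :=
    (lt_of_le_of_lt (measure_mono Set.diff_subset) hAfin).ne
  have hfin2 : volume (B \ A) ≠ ⊤ :=
    (lt_of_le_of_lt (measure_mono Set.diff_subset) hBfin).ne
  have htr : (volume (A \ B)).toReal + (volume (B \ A)).toReal ≤ C * ‖b - a‖ := by
    rw [← ENNReal.toReal_add hfin1 hfin2, ← hsd]
    exact ENNReal.toReal_le_of_le_ofReal (by positivity) hsdval
  calc ‖(∫ x in A, u x τ) - ∫ x in B, u x τ‖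
      = ‖(∫ x in A \ B, u x τ) - ∫ x in B \ A, u x τ‖ := by rw [key]
    _ ≤ ‖∫ x in A \ B, u x τ‖ + ‖∫ x in B \ A, u x τ‖ := norm_sub_le _ _
    _ ≤ gτ * (volume (A \ B)).toReal + gτ * (volume (B \ A)).toReal := add_le_add bd1 bd2
    _ = gτ * ((volume (A \ B)).toReal + (volume (B \ A)).toReal) := by ring
    _ ≤ gτ * (C * ‖b - a‖) := mul_le_mul_of_nonneg_left htr hgnn
set_option maxHeartbeats 2000000 in
/-- Lemma 3.1 of the paper: under the Lipschitz shift condition on the body set `S` and a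
smallness condition on `T₀`, the decoupled integral equation for the swimmer position
`w(t) = z₀ + (1/m) ∫₀ᵗ ∫_{S+w(τ)} u dx dτ` has a unique continuous solution staying
within distance `h₀/2` of `z₀`. -/
theorem decoupled_position_equation_wellposed
    (S : Set (EuclideanSpace ℝ (Fin 3))) (hSb : Bornology.IsBounded S)
    (hSm : MeasurableSet S) (hm : 0 < (volume S).toReal)
    (C h0 T T0 : ℝ) (hC : 0 < C) (hh0 : 0 < h0) (hT0 : 0 < T0) (hT0T : T0 ≤ T)
    (hshift : ∀ h : EuclideanSpace ℝ (Fin 3), ‖h‖ < h0 →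
      volume (symmDiff S ((fun x => x + h) '' S)) ≤ ENNReal.ofReal (C * ‖h‖))
    (u : EuclideanSpace ℝ (Fin 3) → ℝ → EuclideanSpace ℝ (Fin 3))
    (hu : Measurable (Function.uncurry u))
    (g : ℝ → ℝ) (hgm : Measurable g)
    (hg : ∀ t ∈ Set.Icc (0:ℝ) T, ∀ x, ‖u x t‖ ≤ g t)
    (hgL2 : IntegrableOn (fun t => (g t) ^ 2) (Set.Icc (0:ℝ) T))
    (huL2 : IntegrableOn
      (fun p : (EuclideanSpace ℝ (Fin 3)) × ℝ => ‖u p.1 p.2‖ ^ 2)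
      (Set.univ ×ˢ Set.Icc (0:ℝ) T))
    (hT0small : T0 < min
      ((volume S).toReal * h0 ^ 2 / (4 * ∫ τ in Set.Icc (0:ℝ) T, ∫ x, ‖u x τ‖ ^ 2))
      ((volume S).toReal ^ 2 / (C ^ 2 * ∫ τ in Set.Icc (0:ℝ) T, (g τ) ^ 2)))
    (z0 : EuclideanSpace ℝ (Fin 3)) :
    ∃ w : ℝ → EuclideanSpace ℝ (Fin 3),
      (ContinuousOn w (Set.Icc 0 T0) ∧
        (∀ t ∈ Set.Icc (0:ℝ) T0,
          w t = z0 + ((volume S).toReal)⁻¹ •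
            ∫ τ in Set.Icc (0:ℝ) t, ∫ x in (fun y => y + w τ) '' S, u x τ) ∧
        ∀ t ∈ Set.Icc (0:ℝ) T0, ‖w t - z0‖ ≤ h0 / 2) ∧
      ∀ w' : ℝ → EuclideanSpace ℝ (Fin 3),
        (ContinuousOn w' (Set.Icc 0 T0) ∧
          (∀ t ∈ Set.Icc (0:ℝ) T0,
            w' t = z0 + ((volume S).toReal)⁻¹ •
              ∫ τ in Set.Icc (0:ℝ) t, ∫ x in (fun y => y + w' τ) '' S, u x τ) ∧
          ∀ t ∈ Set.Icc (0:ℝ) T0, ‖w' t - z0‖ ≤ h0 / 2) →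
        ∀ t ∈ Set.Icc (0:ℝ) T0, w' t = w t := by
  classical
  have hle : (0:ℝ) ≤ T0 := hT0.le
  set m := (volume S).toReal with hmdef
  have hmin := lt_min_iff.mp hT0small
  set I1 := ∫ τ in Set.Icc (0:ℝ) T, ∫ x, ‖u x τ‖ ^ 2 with hI1
  set G := ∫ τ in Set.Icc (0:ℝ) T, (g τ) ^ 2 with hGd
  have hJnn : ∀ τ : ℝ, 0 ≤ ∫ x, ‖u x τ‖ ^ 2 := fun τ => integral_nonneg fun x => by positivity
  have hI1nn : 0 ≤ I1 := by
    rw [hI1]; exact setIntegral_nonneg measurableSet_Icc fun τ _ => hJnn τ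
  have hGnn : 0 ≤ G := by
    rw [hGd]; exact setIntegral_nonneg measurableSet_Icc fun τ _ => sq_nonneg _
  have hI1pos : 0 < I1 := by
    rcases hI1nn.lt_or_eq with h | h
    · exact h
    · exfalso; rw [← h] at hmin; norm_num at hmin; linarith [hmin.1]
  have hGpos : 0 < G := by
    rcases hGnn.lt_or_eq with h | h
    · exact h
    · exfalso; rw [← h] at hmin; norm_num at hmin; linarith [hmin.2]
  have hTI : T0 * I1 < m * h0 ^ 2 / 4 := by
    have h4 : (0:ℝ) < 4 * I1 := by linarith
    have h5 := (lt_div_iff₀ h4).mp hmin.1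
    nlinarith
  have hTG : T0 * (C ^ 2 * G) < m ^ 2 := by
    have h4 : (0:ℝ) < C ^ 2 * G := by positivity
    have h5 := (lt_div_iff₀ h4).mp hmin.2
    linarith
  have hB0 : m⁻¹ * (Real.sqrt m * (Real.sqrt T0 * Real.sqrt I1)) ≤ h0 / 2 := by
    have e1 : Real.sqrt T0 * Real.sqrt I1 = Real.sqrt (T0 * I1) := (Real.sqrt_mul hle _).symm
    have e2 : Real.sqrt (T0 * I1) ≤ Real.sqrt m * (h0 / 2) := by
      rw [show Real.sqrt m * (h0 / 2) = Real.sqrt (m * (h0 / 2) ^ 2) by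
        rw [Real.sqrt_mul hm.le, Real.sqrt_sq (by positivity)]]
      exact Real.sqrt_le_sqrt (by nlinarith)
    have hs1 : Real.sqrt m * (Real.sqrt T0 * Real.sqrt I1) ≤ h0 / 2 * m := by
      calc Real.sqrt m * (Real.sqrt T0 * Real.sqrt I1)
          = Real.sqrt m * Real.sqrt (T0 * I1) := by rw [e1]
        _ ≤ Real.sqrt m * (Real.sqrt m * (h0 / 2)) :=
            mul_le_mul_of_nonneg_left e2 (Real.sqrt_nonneg m)
        _ = Real.sqrt m * Real.sqrt m * (h0 / 2) := by ring
        _ = h0 / 2 * m := by rw [Real.mul_self_sqrt hm.le]; ring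
    calc m⁻¹ * (Real.sqrt m * (Real.sqrt T0 * Real.sqrt I1))
        ≤ m⁻¹ * (h0 / 2 * m) := mul_le_mul_of_nonneg_left hs1 (by positivity)
      _ = h0 / 2 := by field_simp
  have hKlt : m⁻¹ * (C * (Real.sqrt T0 * Real.sqrt G)) < 1 := by
    have hCm : C * (Real.sqrt T0 * Real.sqrt G) < m := by
      have e1 : Real.sqrt T0 * Real.sqrt G = Real.sqrt (T0 * G) := (Real.sqrt_mul hle _).symm
      have e2 : C * Real.sqrt (T0 * G) = Real.sqrt (C ^ 2 * (T0 * G)) := by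
        rw [Real.sqrt_mul (sq_nonneg C) (T0 * G), Real.sqrt_sq hC.le]
      have e3 : Real.sqrt (C ^ 2 * (T0 * G)) < m := by
        have := Real.sqrt_lt_sqrt (by positivity : (0:ℝ) ≤ C ^ 2 * (T0 * G))
          (by nlinarith : C ^ 2 * (T0 * G) < m ^ 2)
        rwa [Real.sqrt_sq hm.le] at this
      rw [e1, e2]; exact e3
    rw [show m⁻¹ * (C * (Real.sqrt T0 * Real.sqrt G)) = C * (Real.sqrt T0 * Real.sqrt G) / m
      by ring]
    exact (div_lt_one hm).mpr hCm
  -- basic integrability of g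
  have hgnnIcc : ∀ τ ∈ Set.Icc (0:ℝ) T, 0 ≤ g τ :=
    fun τ hτ => le_trans (norm_nonneg (u 0 τ)) (hg τ hτ 0)
  have hgint : IntegrableOn g (Set.Icc (0:ℝ) T) := by
    refine Integrable.mono' (hgL2.add (integrable_const 1))
      hgm.aestronglyMeasurable.restrict (Filter.Eventually.of_forall fun τ => ?_)
    show ‖g τ‖ ≤ g τ ^ 2 + 1
    rw [Real.norm_eq_abs]
    nlinarith [sq_nonneg (|g τ| - 1), sq_abs (g τ), abs_nonneg (g τ)]
  have hsub2 : Set.Icc (0:ℝ) T0 ⊆ Set.Icc (0:ℝ) T := Set.Icc_subset_Icc_right hT0T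
  haveI hfinT0 : IsFiniteMeasure ((volume : Measure ℝ).restrict (Set.Icc (0:ℝ) T0)) :=
    ⟨by rw [Measure.restrict_apply_univ, Real.volume_Icc]; exact ENNReal.ofReal_lt_top⟩
  have hμT0 : (((volume : Measure ℝ).restrict (Set.Icc (0:ℝ) T0)) Set.univ).toReal = T0 := by
    rw [Measure.restrict_apply_univ, Real.volume_Icc, sub_zero, ENNReal.toReal_ofReal hle]
  -- the extension operator and the integral operator
  set ext : C(Set.Icc (0:ℝ) T0, EuclideanSpace ℝ (Fin 3)) → ℝ → EuclideanSpace ℝ (Fin 3) :=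
    fun f τ => f (Set.projIcc 0 T0 hle τ) with hext
  have hext_cont : ∀ f, Continuous (ext f) := fun f => f.continuous.comp continuous_projIcc
  have hsmf : ∀ f, StronglyMeasurable (fun τ => ∫ x in (fun y => y + ext f τ) '' S, u x τ) :=
    fun f => dp_bodyInt_sm S hSm u hu (ext f) (hext_cont f).measurable
  have hbdd : ∀ f, ∀ τ ∈ Set.Icc (0:ℝ) T,
      ‖∫ x in (fun y => y + ext f τ) '' S, u x τ‖ ≤ g τ * m :=
    fun f τ hτ => dp_bodyInt_le_const S hSb u (ext f τ) τ (g τ) (hg τ hτ)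
  have hbint : ∀ f, IntegrableOn (fun τ => ∫ x in (fun y => y + ext f τ) '' S, u x τ)
      (Set.Icc (0:ℝ) T0) := by
    intro f
    refine Integrable.mono' ((hgint.mono_set hsub2).mul_const m)
      (hsmf f).aestronglyMeasurable.restrict ?_
    rw [ae_restrict_iff' measurableSet_Icc]
    exact Filter.Eventually.of_forall fun τ hτ => hbdd f τ (hsub2 hτ)
  set Φ : C(Set.Icc (0:ℝ) T0, EuclideanSpace ℝ (Fin 3)) → ℝ → EuclideanSpace ℝ (Fin 3) :=
    fun f t => z0 + m⁻¹ • ∫ τ in Set.Icc (0:ℝ) t, ∫ x in (fun y => y + ext f τ) '' S, u x τ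
    with hΦdef
  have hΦcont : ∀ f, ContinuousOn (Φ f) (Set.Icc (0:ℝ) T0) := fun f =>
    continuousOn_const.add (by exact (intervalIntegral.continuousOn_primitive_Icc (hbint f)).const_smul m⁻¹)
  -- L² slicing facts
  have hUprod : Integrable (fun p : (EuclideanSpace ℝ (Fin 3)) × ℝ => ‖u p.1 p.2‖ ^ 2)
      ((volume : Measure (EuclideanSpace ℝ (Fin 3))).prod
        ((volume : Measure ℝ).restrict (Set.Icc (0:ℝ) T))) := by
    have h := huL2
    rwa [IntegrableOn, Measure.volume_eq_prod, ← Measure.prod_restrict,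
      Measure.restrict_univ] at h
  have hslice : ∀ᵐ τ ∂((volume : Measure ℝ).restrict (Set.Icc (0:ℝ) T)),
      Integrable (fun x => ‖u x τ‖ ^ 2) := hUprod.prod_left_ae
  have hJsm : StronglyMeasurable (fun τ : ℝ => ∫ x, ‖u x τ‖ ^ 2) :=
    ((hu.norm.pow_const 2).stronglyMeasurable).integral_prod_left'
  have hJint : IntegrableOn (fun τ : ℝ => ∫ x, ‖u x τ‖ ^ 2) (Set.Icc (0:ℝ) T) := by
    have h1 := hUprod.integral_norm_prod_right
    refine h1.congr (Filter.Eventually.of_forall fun τ => ?_)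
    exact integral_congr_ae (Filter.Eventually.of_forall fun x =>
      Real.norm_of_nonneg (by positivity))
  have hφm : Measurable (fun τ : ℝ => Real.sqrt m * Real.sqrt (∫ x, ‖u x τ‖ ^ 2)) :=
    (hJsm.measurable.sqrt).const_mul _
  have hφint : IntegrableOn (fun τ : ℝ => Real.sqrt m * Real.sqrt (∫ x, ‖u x τ‖ ^ 2))
      (Set.Icc (0:ℝ) T) := by
    refine Integrable.mono' ((hJint.add (integrable_const 1)).const_mul (Real.sqrt m))
      hφm.aestronglyMeasurable.restrict (Filter.Eventually.of_forall fun τ => ?_)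
    show ‖Real.sqrt m * Real.sqrt (∫ x, ‖u x τ‖ ^ 2)‖ ≤ Real.sqrt m * ((∫ x, ‖u x τ‖ ^ 2) + 1)
    rw [Real.norm_eq_abs, abs_of_nonneg (by positivity)]
    refine mul_le_mul_of_nonneg_left ?_ (Real.sqrt_nonneg m)
    nlinarith [Real.sq_sqrt (hJnn τ), Real.sqrt_nonneg (∫ x, ‖u x τ‖ ^ 2)]
  have hφbd : ∀ f, ∀ᵐ τ ∂((volume : Measure ℝ).restrict (Set.Icc (0:ℝ) T)),
      ‖∫ x in (fun y => y + ext f τ) '' S, u x τ‖ ≤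
        Real.sqrt m * Real.sqrt (∫ x, ‖u x τ‖ ^ 2) := by
    intro f
    filter_upwards [hslice] with τ hτ
    exact dp_bodyInt_cs S hSb u hu (ext f τ) τ hτ
  -- Cauchy–Schwarz in time for √J
  have hsqint : IntegrableOn (fun τ : ℝ => Real.sqrt (∫ x, ‖u x τ‖ ^ 2) ^ 2)
      (Set.Icc (0:ℝ) T0) := by
    refine (hJint.mono_set hsub2).congr (Filter.Eventually.of_forall fun τ => ?_)
    show (∫ x, ‖u x τ‖ ^ 2) = Real.sqrt (∫ x, ‖u x τ‖ ^ 2) ^ 2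
    rw [Real.sq_sqrt (hJnn τ)]
  have hCS : ∫ τ in Set.Icc (0:ℝ) T0, Real.sqrt (∫ x, ‖u x τ‖ ^ 2)
      ≤ Real.sqrt T0 * Real.sqrt I1 := by
    have h1 := dp_cs_sqrt ((volume : Measure ℝ).restrict (Set.Icc (0:ℝ) T0))
      (Filter.Eventually.of_forall fun τ => Real.sqrt_nonneg _)
      (hJsm.measurable.sqrt).aestronglyMeasurable.restrict hsqint
    rw [hμT0] at h1
    have hJle : ∫ τ in Set.Icc (0:ℝ) T0, Real.sqrt (∫ x, ‖u x τ‖ ^ 2) ^ 2 ≤ I1 := by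
      have e : ∫ τ in Set.Icc (0:ℝ) T0, Real.sqrt (∫ x, ‖u x τ‖ ^ 2) ^ 2
          = ∫ τ in Set.Icc (0:ℝ) T0, ∫ x, ‖u x τ‖ ^ 2 :=
        integral_congr_ae (Filter.Eventually.of_forall fun τ => Real.sq_sqrt (hJnn τ))
      rw [e, hI1]
      exact setIntegral_mono_set hJint (Filter.Eventually.of_forall fun τ => hJnn τ)
        hsub2.eventuallyLE
    exact h1.trans (mul_le_mul_of_nonneg_left (Real.sqrt_le_sqrt hJle) (Real.sqrt_nonneg _))
  -- self-map bound
  have hself : ∀ f, ∀ t ∈ Set.Icc (0:ℝ) T0, ‖Φ f t - z0‖ ≤ h0 / 2 := by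
    intro f t ht
    have hsub1 : Set.Icc (0:ℝ) t ⊆ Set.Icc (0:ℝ) T0 := Set.Icc_subset_Icc_right ht.2
    have hInt_t : IntegrableOn (fun τ => ∫ x in (fun y => y + ext f τ) '' S, u x τ)
        (Set.Icc (0:ℝ) t) := (hbint f).mono_set hsub1
    have step1 : ‖∫ τ in Set.Icc (0:ℝ) t, ∫ x in (fun y => y + ext f τ) '' S, u x τ‖
        ≤ ∫ τ in Set.Icc (0:ℝ) t, Real.sqrt m * Real.sqrt (∫ x, ‖u x τ‖ ^ 2) := by
      refine le_trans (norm_integral_le_integral_norm _) ?_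
      refine integral_mono_ae hInt_t.norm (hφint.mono_set (hsub1.trans hsub2)) ?_
      exact ae_restrict_of_ae_restrict_of_subset (hsub1.trans hsub2) (hφbd f)
    have step2 : ∫ τ in Set.Icc (0:ℝ) t, Real.sqrt m * Real.sqrt (∫ x, ‖u x τ‖ ^ 2)
        ≤ ∫ τ in Set.Icc (0:ℝ) T0, Real.sqrt m * Real.sqrt (∫ x, ‖u x τ‖ ^ 2) :=
      setIntegral_mono_set (hφint.mono_set hsub2)
        (Filter.Eventually.of_forall fun τ => by positivity) hsub1.eventuallyLE
    have step3 : ∫ τ in Set.Icc (0:ℝ) T0, Real.sqrt m * Real.sqrt (∫ x, ‖u x τ‖ ^ 2)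
        = Real.sqrt m * ∫ τ in Set.Icc (0:ℝ) T0, Real.sqrt (∫ x, ‖u x τ‖ ^ 2) :=
      integral_const_mul _ _
    have hnorm : ‖Φ f t - z0‖
        = m⁻¹ * ‖∫ τ in Set.Icc (0:ℝ) t, ∫ x in (fun y => y + ext f τ) '' S, u x τ‖ := by
      rw [hΦdef]
      simp only [add_sub_cancel_left, norm_smul, Real.norm_eq_abs,
        abs_of_nonneg (inv_nonneg.mpr hm.le)]
    rw [hnorm]
    calc m⁻¹ * ‖∫ τ in Set.Icc (0:ℝ) t, ∫ x in (fun y => y + ext f τ) '' S, u x τ‖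
        ≤ m⁻¹ * (Real.sqrt m * (Real.sqrt T0 * Real.sqrt I1)) := by
          refine mul_le_mul_of_nonneg_left ?_ (by positivity)
          refine le_trans step1 (le_trans step2 ?_)
          rw [step3]
          exact mul_le_mul_of_nonneg_left hCS (Real.sqrt_nonneg m)
      _ ≤ h0 / 2 := hB0
  -- Cauchy–Schwarz in time for g
  have hgCS : ∫ τ in Set.Icc (0:ℝ) T0, g τ ≤ Real.sqrt T0 * Real.sqrt G := by
    have hgnn0 : ∀ᵐ τ ∂((volume : Measure ℝ).restrict (Set.Icc (0:ℝ) T0)), 0 ≤ g τ :=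
      (ae_restrict_iff' measurableSet_Icc).2
        (Filter.Eventually.of_forall fun τ hτ => hgnnIcc τ (hsub2 hτ))
    have h1 := dp_cs_sqrt ((volume : Measure ℝ).restrict (Set.Icc (0:ℝ) T0))
      hgnn0 hgm.aestronglyMeasurable.restrict (hgL2.mono_set hsub2)
    rw [hμT0] at h1
    refine h1.trans (mul_le_mul_of_nonneg_left (Real.sqrt_le_sqrt ?_) (Real.sqrt_nonneg _))
    rw [hGd]
    exact setIntegral_mono_set hgL2 (Filter.Eventually.of_forall fun τ => sq_nonneg _)
      hsub2.eventuallyLE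
  -- the contraction estimate
  have hcontr : ∀ f f' : C(Set.Icc (0:ℝ) T0, EuclideanSpace ℝ (Fin 3)),
      (∀ p, ‖f p - z0‖ ≤ h0 / 2) → (∀ p, ‖f' p - z0‖ ≤ h0 / 2) →
      ∀ t ∈ Set.Icc (0:ℝ) T0,
        ‖Φ f t - Φ f' t‖ ≤ m⁻¹ * (C * (Real.sqrt T0 * Real.sqrt G)) * dist f f' := by
    intro f f' hfX hf'X t ht
    have hdnn : (0:ℝ) ≤ dist f f' := dist_nonneg
    have hsub1 : Set.Icc (0:ℝ) t ⊆ Set.Icc (0:ℝ) T0 := Set.Icc_subset_Icc_right ht.2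
    have hptbd : ∀ τ ∈ Set.Icc (0:ℝ) T,
        ‖(∫ x in (fun y => y + ext f τ) '' S, u x τ)
          - ∫ x in (fun y => y + ext f' τ) '' S, u x τ‖ ≤ g τ * (C * dist f f') := by
      intro τ hτ
      have hab : ‖ext f' τ - ext f τ‖ ≤ h0 := by
        have h1 := hfX (Set.projIcc 0 T0 hle τ)
        have h2 := hf'X (Set.projIcc 0 T0 hle τ)
        calc ‖ext f' τ - ext f τ‖
            = ‖(ext f' τ - z0) - (ext f τ - z0)‖ := by rw [sub_sub_sub_cancel_right]
          _ ≤ ‖ext f' τ - z0‖ + ‖ext f τ - z0‖ := norm_sub_le _ _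
          _ ≤ h0 / 2 + h0 / 2 := add_le_add h2 h1
          _ = h0 := by ring
      have hdiff := dp_bodyInt_diff S hSb hSm u hu C h0 hC hh0 hshift
        (ext f τ) (ext f' τ) hab τ (g τ) (hgnnIcc τ hτ) (hg τ hτ)
      refine hdiff.trans ?_
      have hd : ‖ext f' τ - ext f τ‖ ≤ dist f f' := by
        rw [← dist_eq_norm]
        calc dist (ext f' τ) (ext f τ)
            ≤ dist f' f := ContinuousMap.dist_apply_le_dist _
          _ = dist f f' := dist_comm _ _
      exact mul_le_mul_of_nonneg_left (mul_le_mul_of_nonneg_left hd hC.le) (hgnnIcc τ hτ)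
    have hIf := (hbint f).mono_set hsub1
    have hIf' := (hbint f').mono_set hsub1
    have heqd : Φ f t - Φ f' t = m⁻¹ •
        ∫ τ in Set.Icc (0:ℝ) t,
          ((∫ x in (fun y => y + ext f τ) '' S, u x τ)
            - ∫ x in (fun y => y + ext f' τ) '' S, u x τ) := by
      rw [hΦdef, integral_sub hIf hIf', smul_sub]
      exact add_sub_add_left_eq_sub _ _ _
    rw [heqd, norm_smul, Real.norm_eq_abs, abs_of_nonneg (inv_nonneg.mpr hm.le)]
    have hnd : ‖∫ τ in Set.Icc (0:ℝ) t,
        ((∫ x in (fun y => y + ext f τ) '' S, u x τ)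
          - ∫ x in (fun y => y + ext f' τ) '' S, u x τ)‖
        ≤ (Real.sqrt T0 * Real.sqrt G) * (C * dist f f') := by
      refine le_trans (norm_integral_le_integral_norm _) ?_
      have s1 : ∫ τ in Set.Icc (0:ℝ) t,
          ‖(∫ x in (fun y => y + ext f τ) '' S, u x τ)
            - ∫ x in (fun y => y + ext f' τ) '' S, u x τ‖
          ≤ ∫ τ in Set.Icc (0:ℝ) t, g τ * (C * dist f f') := by
        have hae : ∀ᵐ τ ∂((volume : Measure ℝ).restrict (Set.Icc (0:ℝ) t)),
            ‖(∫ x in (fun y => y + ext f τ) '' S, u x τ)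
              - ∫ x in (fun y => y + ext f' τ) '' S, u x τ‖ ≤ g τ * (C * dist f f') :=
          (ae_restrict_iff' measurableSet_Icc).2
            (Filter.Eventually.of_forall fun τ hτ => hptbd τ (hsub2 (hsub1 hτ)))
        exact integral_mono_ae (hIf.sub hIf').norm
          ((hgint.mono_set (hsub1.trans hsub2)).mul_const (C * dist f f')) hae
      have s2 : ∫ τ in Set.Icc (0:ℝ) t, g τ * (C * dist f f')
          ≤ ∫ τ in Set.Icc (0:ℝ) T0, g τ * (C * dist f f') := by
        have hae2 : ∀ᵐ τ ∂((volume : Measure ℝ).restrict (Set.Icc (0:ℝ) T0)),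
            0 ≤ g τ * (C * dist f f') :=
          (ae_restrict_iff' measurableSet_Icc).2
            (Filter.Eventually.of_forall fun τ hτ =>
              mul_nonneg (hgnnIcc τ (hsub2 hτ)) (by positivity))
        exact setIntegral_mono_set ((hgint.mono_set hsub2).mul_const (C * dist f f'))
          hae2 hsub1.eventuallyLE
      have s3 : ∫ τ in Set.Icc (0:ℝ) T0, g τ * (C * dist f f')
          = (∫ τ in Set.Icc (0:ℝ) T0, g τ) * (C * dist f f') := integral_mul_const _ _
      refine le_trans s1 (le_trans s2 ?_)
      rw [s3]
      exact mul_le_mul_of_nonneg_right hgCS (by positivity)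
    calc m⁻¹ * ‖∫ τ in Set.Icc (0:ℝ) t,
          ((∫ x in (fun y => y + ext f τ) '' S, u x τ)
            - ∫ x in (fun y => y + ext f' τ) '' S, u x τ)‖
        ≤ m⁻¹ * ((Real.sqrt T0 * Real.sqrt G) * (C * dist f f')) :=
          mul_le_mul_of_nonneg_left hnd (by positivity)
      _ = m⁻¹ * (C * (Real.sqrt T0 * Real.sqrt G)) * dist f f' := by ring
  -- the complete metric space of candidate curves
  set Pred : C(Set.Icc (0:ℝ) T0, EuclideanSpace ℝ (Fin 3)) → Prop :=
    fun f => ∀ p, ‖f p - z0‖ ≤ h0 / 2 with hPred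
  have hPc : IsClosed {f : C(Set.Icc (0:ℝ) T0, EuclideanSpace ℝ (Fin 3)) | Pred f} := by
    have he : {f : C(Set.Icc (0:ℝ) T0, EuclideanSpace ℝ (Fin 3)) | Pred f}
        = ⋂ p, (fun f : C(Set.Icc (0:ℝ) T0, EuclideanSpace ℝ (Fin 3)) => f p) ⁻¹'
            Metric.closedBall z0 (h0 / 2) := by
      ext f
      simp [hPred, Metric.mem_closedBall, dist_eq_norm]
    rw [he]
    exact isClosed_iInter fun p =>
      Metric.isClosed_closedBall.preimage (continuous_eval_const p)
  haveI : CompleteSpace {f : C(Set.Icc (0:ℝ) T0, EuclideanSpace ℝ (Fin 3)) // Pred f} :=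
    hPc.completeSpace_coe
  haveI : Nonempty {f : C(Set.Icc (0:ℝ) T0, EuclideanSpace ℝ (Fin 3)) // Pred f} := by
    refine ⟨⟨ContinuousMap.const _ z0, fun p => ?_⟩⟩
    simp only [ContinuousMap.const_apply, sub_self, norm_zero]
    positivity
  set K : NNReal := ⟨m⁻¹ * (C * (Real.sqrt T0 * Real.sqrt G)), by positivity⟩ with hK
  set Φm : {f : C(Set.Icc (0:ℝ) T0, EuclideanSpace ℝ (Fin 3)) // Pred f} →
      {f : C(Set.Icc (0:ℝ) T0, EuclideanSpace ℝ (Fin 3)) // Pred f} :=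
    fun f => ⟨⟨(Set.Icc (0:ℝ) T0).restrict (Φ f.1), (hΦcont f.1).restrict⟩,
      fun p => hself f.1 p p.2⟩ with hΦm
  have hcw : ContractingWith K Φm := by
    constructor
    · rw [← NNReal.coe_lt_coe, NNReal.coe_one]
      exact hKlt
    · refine LipschitzWith.of_dist_le_mul fun f f' => ?_
      have hd12 : dist (Φm f) (Φm f') = dist (Φm f).1 (Φm f').1 := Subtype.dist_eq _ _
      have hd34 : dist f f' = dist f.1 f'.1 := Subtype.dist_eq _ _
      rw [hd12, hd34]
      refine (ContinuousMap.dist_le (by positivity)).2 fun p => ?_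
      have h := hcontr f.1 f'.1 f.2 f'.2 p p.2
      have he : dist ((Φm f).1 p) ((Φm f').1 p) = ‖Φ f.1 ↑p - Φ f'.1 ↑p‖ := dist_eq_norm _ _
      rw [he]
      exact h
  set fp := ContractingWith.fixedPoint Φm hcw with hfpdef
  have hfp : Function.IsFixedPt Φm fp := ContractingWith.fixedPoint_isFixedPt hcw
  have hwt : ∀ t (ht : t ∈ Set.Icc (0:ℝ) T0), ext fp.1 t = fp.1 ⟨t, ht⟩ := by
    intro t ht
    show fp.1 (Set.projIcc 0 T0 hle t) = fp.1 ⟨t, ht⟩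
    rw [Set.projIcc_of_mem hle ht]
  refine ⟨ext fp.1, ⟨(hext_cont fp.1).continuousOn, ?_, ?_⟩, ?_⟩
  · intro t ht
    have h2 : fp.1 ⟨t, ht⟩ = Φ fp.1 t := by
      conv_lhs => rw [← hfp]
      rfl
    rw [hwt t ht, h2, hΦdef]
  · intro t ht
    rw [hwt t ht]
    exact fp.2 ⟨t, ht⟩
  · rintro w' ⟨hc', heq', hb'⟩ t ht
    set W' : C(Set.Icc (0:ℝ) T0, EuclideanSpace ℝ (Fin 3)) :=
      ⟨(Set.Icc (0:ℝ) T0).restrict w', hc'.restrict⟩ with hW'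
    have hW'X : Pred W' := fun p => hb' p p.2
    have hfix' : Function.IsFixedPt Φm ⟨W', hW'X⟩ := by
      apply Subtype.ext
      apply ContinuousMap.ext
      intro p
      show Φ W' ↑p = w' ↑p
      have hWext : ∀ τ ∈ Set.Icc (0:ℝ) (↑p : ℝ), ext W' τ = w' τ := by
        intro τ hτ
        have hτ' : τ ∈ Set.Icc (0:ℝ) T0 := ⟨hτ.1, hτ.2.trans p.2.2⟩
        show W' (Set.projIcc 0 T0 hle τ) = w' τ
        rw [Set.projIcc_of_mem hle hτ']
        rfl
      have hintC : ∫ τ in Set.Icc (0:ℝ) (↑p : ℝ),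
          ∫ x in (fun y => y + ext W' τ) '' S, u x τ
          = ∫ τ in Set.Icc (0:ℝ) (↑p : ℝ), ∫ x in (fun y => y + w' τ) '' S, u x τ :=
        setIntegral_congr_fun measurableSet_Icc fun τ hτ => by rw [hWext τ hτ]
      rw [hΦdef]
      dsimp only
      rw [hintC, ← heq' ↑p p.2]
    have hWfp : (⟨W', hW'X⟩ : {f : C(Set.Icc (0:ℝ) T0, EuclideanSpace ℝ (Fin 3)) // Pred f})
        = fp := hcw.fixedPoint_unique hfix'
    have hval := congrArg (fun q : {f : C(Set.Icc (0:ℝ) T0,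
        EuclideanSpace ℝ (Fin 3)) // Pred f} => q.1 ⟨t, ht⟩) hWfp
    rw [hwt t ht]
    exact hval
end DPaux
end

section
/- Under the hypotheses of the previous contraction setup, the map $D : B \to B$ on $B = \{w \in C([0,T_0];\mathbb{R}^3) : \|w - z_0\|_\infty \le h_0/2\}$ defined by $D(w)(t) = z_0 + \frac{1}{m}\int_0^t \int_{S+w(\tau)} u(x,\tau)\,dx\,d\tau$ is a contraction with Lipschitz constant $\frac{C\sqrt{T_0}}{m}\|u\|_{L^2(0,T;L^\infty)} < 1$, i.e. $\|D(w^{(1)}) - D(w^{(2)})\|_\infty \le \frac{C\sqrt{T_0}}{m}\|u\|_{L^2(0,T;L^\infty)} \|w^{(1)} - w^{(2)}\|_\infty$ for all $w^{(1)}, w^{(2)} \in B$. -/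
open MeasureTheory

private lemma vol_img_aux (a : EuclideanSpace ℝ (Fin 3)) (s : Set (EuclideanSpace ℝ (Fin 3)))
    (hs : MeasurableSet s) : volume ((fun x => x + a) '' s) = volume s := by
  have him : MeasurableSet ((fun x => x + a) '' s) :=
    ((MeasurableEquiv.addRight a).measurableEmbedding.measurableSet_image).mpr hs
  have h := (measurePreserving_add_right (volume : Measure (EuclideanSpace ℝ (Fin 3))) a).measure_preimage
    him.nullMeasurableSet
  rw [Set.preimage_image_eq s (add_left_injective a)] at h; exact h.symm

private lemma meas_img_aux (a : EuclideanSpace ℝ (Fin 3)) {s : Set (EuclideanSpace ℝ (Fin 3))}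
    (hs : MeasurableSet s) : MeasurableSet ((fun x => x + a) '' s) :=
  ((MeasurableEquiv.addRight a).measurableEmbedding.measurableSet_image).mpr hs

private lemma symmdiff_translate_aux (S : Set (EuclideanSpace ℝ (Fin 3))) (hS : MeasurableSet S)
    (a b : EuclideanSpace ℝ (Fin 3)) :
    volume (symmDiff ((fun x => x + a) '' S) ((fun x => x + b) '' S)) =
    volume (symmDiff S ((fun x => x + (b - a)) '' S)) := by
  have h1 : (fun x => x + b) '' S = (fun x => x + a) '' ((fun x => x + (b - a)) '' S) := by
    rw [Set.image_image]; ext x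
    constructor
    · rintro ⟨y, hy, rfl⟩; exact ⟨y, hy, by abel⟩
    · rintro ⟨y, hy, rfl⟩; exact ⟨y, hy, by abel⟩
  rw [h1, ← Set.image_symmDiff (add_left_injective a)]
  exact vol_img_aux a _ (hS.symmDiff (meas_img_aux _ hS))

private lemma shift_bound_aux (S : Set (EuclideanSpace ℝ (Fin 3))) (hS : MeasurableSet S)
    (C h0 : ℝ) (hC : 0 < C) (hh0 : 0 < h0)
    (hshift : ∀ h : EuclideanSpace ℝ (Fin 3), ‖h‖ < h0 →
      volume (symmDiff S ((fun x => x + h) '' S)) ≤ ENNReal.ofReal (C * ‖h‖))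
    (h : EuclideanSpace ℝ (Fin 3)) (hh : ‖h‖ ≤ h0) :
    volume (symmDiff S ((fun x => x + h) '' S)) ≤ ENNReal.ofReal (C * ‖h‖) := by
  have hhalf : ‖(2:ℝ)⁻¹ • h‖ < h0 := by
    rw [norm_smul]; simp only [norm_inv, Real.norm_ofNat]
    nlinarith [norm_nonneg h]
  have hsub : symmDiff S ((fun x => x + h) '' S) ⊆
      (symmDiff S ((fun x => x + (2:ℝ)⁻¹ • h) '' S)) ∪
      (symmDiff ((fun x => x + (2:ℝ)⁻¹ • h) '' S) ((fun x => x + h) '' S)) :=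
    symmDiff_triangle _ _ _
  have h2 : volume (symmDiff ((fun x => x + (2:ℝ)⁻¹ • h) '' S) ((fun x => x + h) '' S)) =
      volume (symmDiff S ((fun x => x + (h - (2:ℝ)⁻¹ • h)) '' S)) :=
    symmdiff_translate_aux S hS _ _
  have hhs : h - (2:ℝ)⁻¹ • h = (2:ℝ)⁻¹ • h := by
    rw [sub_eq_iff_eq_add, ← add_smul]; norm_num
  calc volume (symmDiff S ((fun x => x + h) '' S))
      ≤ volume (symmDiff S ((fun x => x + (2:ℝ)⁻¹ • h) '' S)) +
        volume (symmDiff ((fun x => x + (2:ℝ)⁻¹ • h) '' S) ((fun x => x + h) '' S)) :=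
        le_trans (measure_mono hsub) (measure_union_le _ _)
    _ ≤ ENNReal.ofReal (C * ‖(2:ℝ)⁻¹ • h‖) + ENNReal.ofReal (C * ‖(2:ℝ)⁻¹ • h‖) := by
        rw [h2, hhs]; exact add_le_add (hshift _ hhalf) (hshift _ hhalf)
    _ = ENNReal.ofReal (C * ‖h‖) := by
        rw [← ENNReal.ofReal_add (by positivity) (by positivity)]
        congr 1
        rw [norm_smul]; simp only [norm_inv, Real.norm_ofNat]; ring

private lemma cs_aux (g : ℝ → ℝ) (hgm : Measurable g) (t : ℝ) (ht : 0 ≤ t)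
    (hg0 : ∀ τ ∈ Set.Icc (0:ℝ) t, 0 ≤ g τ)
    (hgL2 : IntegrableOn (fun τ => (g τ) ^ 2) (Set.Icc (0:ℝ) t)) :
    ∫ τ in Set.Icc (0:ℝ) t, g τ ≤
      Real.sqrt t * Real.sqrt (∫ τ in Set.Icc (0:ℝ) t, (g τ)^2) := by
  set μ := volume.restrict (Set.Icc (0:ℝ) t) with hμ
  haveI : IsFiniteMeasure μ := by
    constructor
    rw [hμ, Measure.restrict_apply_univ]
    exact measure_Icc_lt_top
  have hg0' : 0 ≤ᵐ[μ] g :=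
    (ae_restrict_iff' measurableSet_Icc).mpr (ae_of_all _ hg0)
  have hmem : MemLp g (ENNReal.ofReal 2) μ := by
    rw [show ENNReal.ofReal (2:ℝ) = 2 by norm_num]
    refine (memLp_two_iff_integrable_sq hgm.aestronglyMeasurable).mpr ?_
    simpa [sq, hμ, IntegrableOn] using hgL2
  have hone : MemLp (fun _ : ℝ => (1:ℝ)) (ENNReal.ofReal 2) μ := memLp_const 1
  have h := integral_mul_le_Lp_mul_Lq_of_nonneg
    (Real.holderConjugate_iff_eq_conjExponent (by norm_num) |>.mpr (by norm_num) :
      Real.HolderConjugate 2 2)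
    hg0' (ae_of_all _ (fun _ => zero_le_one)) hmem hone
  simp only [mul_one] at h
  calc ∫ τ in Set.Icc (0:ℝ) t, g τ = ∫ a, g a ∂μ := rfl
    _ ≤ (∫ a, g a ^ (2:ℝ) ∂μ) ^ (1/(2:ℝ)) * (∫ _a : ℝ, (1:ℝ) ^ (2:ℝ) ∂μ) ^ (1/(2:ℝ)) := h
    _ = Real.sqrt t * Real.sqrt (∫ τ in Set.Icc (0:ℝ) t, (g τ)^2) := by
        rw [mul_comm]
        congr 1
        · rw [show ((1:ℝ) ^ (2:ℝ)) = 1 by norm_num]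
          simp only [hμ, integral_const, measureReal_def, Measure.restrict_apply_univ, Real.volume_Icc,
            smul_eq_mul, mul_one]
          rw [ENNReal.toReal_ofReal (by linarith), Real.sqrt_eq_rpow, sub_zero]
        · rw [Real.sqrt_eq_rpow]
          congr 1
          refine integral_congr_ae (ae_of_all _ fun a => ?_)
          rw [show (2:ℝ) = ((2:ℕ):ℝ) by norm_num]
          simp [Real.rpow_natCast]

set_option maxHeartbeats 1000000 in
/-- The fixed-point map `D(w)(t) = z₀ + (1/m)∫₀ᵗ∫_{S+w(τ)} u dx dτ` of Lemma 3.1 is a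
contraction on the ball `B = {w : ‖w - z₀‖_∞ ≤ h₀/2}` with Lipschitz constant
`C√T₀‖u‖_{L²(0,T;L^∞)}/m < 1`. -/
theorem fixed_point_map_is_contraction
    (S : Set (EuclideanSpace ℝ (Fin 3))) (hSb : Bornology.IsBounded S)
    (hSm : MeasurableSet S) (hm : 0 < (volume S).toReal)
    (C h0 T T0 : ℝ) (hC : 0 < C) (hh0 : 0 < h0) (hT0 : 0 < T0) (hT0T : T0 ≤ T)
    (hshift : ∀ h : EuclideanSpace ℝ (Fin 3), ‖h‖ < h0 →
      volume (symmDiff S ((fun x => x + h) '' S)) ≤ ENNReal.ofReal (C * ‖h‖))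
    (u : EuclideanSpace ℝ (Fin 3) → ℝ → EuclideanSpace ℝ (Fin 3))
    (hu : Measurable (Function.uncurry u))
    (g : ℝ → ℝ) (hgm : Measurable g)
    (hg : ∀ t ∈ Set.Icc (0:ℝ) T, ∀ x, ‖u x t‖ ≤ g t)
    (hgL2 : IntegrableOn (fun t => (g t) ^ 2) (Set.Icc (0:ℝ) T))
    (huL2 : IntegrableOn
      (fun p : (EuclideanSpace ℝ (Fin 3)) × ℝ => ‖u p.1 p.2‖ ^ 2)
      (Set.univ ×ˢ Set.Icc (0:ℝ) T))
    -- `T₀ < m²/(C²‖u‖²_{L²(0,T;L^∞)})`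
    (hT0small : T0 < (volume S).toReal ^ 2 /
      (C ^ 2 * ∫ τ in Set.Icc (0:ℝ) T, (g τ) ^ 2))
    -- `D` maps the ball `B` into itself: `√T₀ ‖u‖_{L²(Q_T)} / √m < h₀/2`
    (hself : Real.sqrt T0 *
        Real.sqrt (∫ τ in Set.Icc (0:ℝ) T, ∫ x, ‖u x τ‖ ^ 2) /
        Real.sqrt ((volume S).toReal) < h0 / 2)
    (z0 : EuclideanSpace ℝ (Fin 3)) :
    C * Real.sqrt T0 / (volume S).toReal *
        Real.sqrt (∫ τ in Set.Icc (0:ℝ) T, (g τ) ^ 2) < 1 ∧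
      ∀ w1 w2 : ℝ → EuclideanSpace ℝ (Fin 3),
        ContinuousOn w1 (Set.Icc 0 T0) → ContinuousOn w2 (Set.Icc 0 T0) →
        (∀ t ∈ Set.Icc (0:ℝ) T0, ‖w1 t - z0‖ ≤ h0 / 2) →
        (∀ t ∈ Set.Icc (0:ℝ) T0, ‖w2 t - z0‖ ≤ h0 / 2) →
        ∀ M : ℝ, (∀ τ ∈ Set.Icc (0:ℝ) T0, ‖w1 τ - w2 τ‖ ≤ M) →
        ∀ t ∈ Set.Icc (0:ℝ) T0,
          ‖(z0 + ((volume S).toReal)⁻¹ •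
              ∫ τ in Set.Icc (0:ℝ) t, ∫ x in (fun y => y + w1 τ) '' S, u x τ) -
            (z0 + ((volume S).toReal)⁻¹ •
              ∫ τ in Set.Icc (0:ℝ) t, ∫ x in (fun y => y + w2 τ) '' S, u x τ)‖
          ≤ C * Real.sqrt T0 / (volume S).toReal *
              Real.sqrt (∫ τ in Set.Icc (0:ℝ) T, (g τ) ^ 2) * M := by
  set m := (volume S).toReal with hmdef
  set I := ∫ τ in Set.Icc (0:ℝ) T, (g τ) ^ 2 with hIdef
  have hI0 : 0 ≤ I := integral_nonneg fun τ => sq_nonneg _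
  have hgnn : ∀ τ ∈ Set.Icc (0:ℝ) T, 0 ≤ g τ := fun τ hτ =>
    le_trans (norm_nonneg (u 0 τ)) (hg τ hτ 0)
  have hSfin : volume S < ⊤ := hSb.measure_lt_top
  -- Part 1: the contraction constant is < 1
  have hK1 : C * Real.sqrt T0 / m * Real.sqrt I < 1 := by
    rcases eq_or_lt_of_le hI0 with hIz | hIpos
    · rw [← hIz, Real.sqrt_zero, mul_zero]; norm_num
    · have hKnn : 0 ≤ C * Real.sqrt T0 / m * Real.sqrt I := by positivity
      have hsq : (C * Real.sqrt T0 / m * Real.sqrt I) ^ 2 = C ^ 2 * T0 * I / m ^ 2 := by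
        rw [mul_pow, div_pow, mul_pow, Real.sq_sqrt hT0.le, Real.sq_sqrt hI0]
        ring
      have hlt : C ^ 2 * T0 * I / m ^ 2 < 1 := by
        rw [div_lt_one (by positivity)]
        have hd : 0 < C ^ 2 * I := by positivity
        rw [lt_div_iff₀ hd] at hT0small
        nlinarith
      nlinarith [hsq, hlt, hKnn]
  refine ⟨hK1, ?_⟩
  intro w1 w2 hc1 hc2 hb1 hb2 M hM t ht
  obtain ⟨ht0, htT0⟩ := ht
  have htT : t ≤ T := le_trans htT0 hT0T
  have hM0 : 0 ≤ M := le_trans (norm_nonneg _) (hM 0 ⟨le_refl _, hT0.le⟩)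
  -- clamped versions of w1, w2, continuous on all of ℝ
  have hclamp_mem : ∀ τ : ℝ, max 0 (min τ T0) ∈ Set.Icc (0:ℝ) T0 :=
    fun τ => ⟨le_max_left _ _, max_le (hT0.le) (min_le_right _ _)⟩
  have hclamp_id : ∀ τ ∈ Set.Icc (0:ℝ) T0, max 0 (min τ T0) = τ := by
    rintro τ ⟨h1, h2⟩; rw [min_eq_left h2, max_eq_right h1]
  have hclamp_cont : Continuous fun τ : ℝ => max 0 (min τ T0) :=
    continuous_const.max (continuous_id.min continuous_const)
  set V1 : ℝ → EuclideanSpace ℝ (Fin 3) := fun τ => w1 (max 0 (min τ T0)) with hV1def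
  set V2 : ℝ → EuclideanSpace ℝ (Fin 3) := fun τ => w2 (max 0 (min τ T0)) with hV2def
  have hV1c : Continuous V1 := hc1.comp_continuous hclamp_cont hclamp_mem
  have hV2c : Continuous V2 := hc2.comp_continuous hclamp_cont hclamp_mem
  have hV1eq : ∀ τ ∈ Set.Icc (0:ℝ) T0, V1 τ = w1 τ := fun τ hτ => by
    rw [hV1def]; simp only [hclamp_id τ hτ]
  have hV2eq : ∀ τ ∈ Set.Icc (0:ℝ) T0, V2 τ = w2 τ := fun τ hτ => by
    rw [hV2def]; simp only [hclamp_id τ hτ]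
  set F1 : ℝ → EuclideanSpace ℝ (Fin 3) := fun τ => ∫ x in S, u (x + V1 τ) τ with hF1def
  set F2 : ℝ → EuclideanSpace ℝ (Fin 3) := fun τ => ∫ x in S, u (x + V2 τ) τ with hF2def
  -- strong measurability of F1, F2
  have hsm : ∀ V : ℝ → EuclideanSpace ℝ (Fin 3), Continuous V →
      StronglyMeasurable fun τ => ∫ x in S, u (x + V τ) τ := by
    intro V hVc
    have hmeas : Measurable fun p : ℝ × EuclideanSpace ℝ (Fin 3) =>
        Function.uncurry u (p.2 + V p.1, p.1) :=
      hu.comp ((measurable_snd.add (hVc.measurable.comp measurable_fst)).prodMk measurable_fst)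
    exact hmeas.stronglyMeasurable.integral_prod_right'
  have hF1sm : StronglyMeasurable F1 := hsm V1 hV1c
  have hF2sm : StronglyMeasurable F2 := hsm V2 hV2c
  -- g is integrable on [0,T]
  have hgL1 : IntegrableOn g (Set.Icc (0:ℝ) T) := by
    have hconst : IntegrableOn (fun _ : ℝ => (1:ℝ)) (Set.Icc (0:ℝ) T) :=
      (integrableOn_const_iff).mpr (Or.inr measure_Icc_lt_top)
    have hsum : IntegrableOn (fun τ => ((g τ) ^ 2 + 1) / 2) (Set.Icc (0:ℝ) T) :=
      (hgL2.add hconst).div_const 2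
    refine hsum.mono' hgm.aestronglyMeasurable (ae_of_all _ fun τ => ?_)
    rw [Real.norm_eq_abs]
    nlinarith [sq_nonneg (|g τ| - 1), sq_abs (g τ), abs_nonneg (g τ)]
  have hgL1t : IntegrableOn g (Set.Icc (0:ℝ) t) := hgL1.mono_set (Set.Icc_subset_Icc_right htT)
  have hgL2t : IntegrableOn (fun τ => (g τ) ^ 2) (Set.Icc (0:ℝ) t) :=
    hgL2.mono_set (Set.Icc_subset_Icc_right htT)
  -- integrability of F1, F2 on [0, t]
  have hFbound : ∀ (V : ℝ → EuclideanSpace ℝ (Fin 3)), ∀ τ ∈ Set.Icc (0:ℝ) t,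
      ‖∫ x in S, u (x + V τ) τ‖ ≤ m * g τ := by
    intro V τ hτ
    have hτT : τ ∈ Set.Icc (0:ℝ) T := ⟨hτ.1, le_trans hτ.2 htT⟩
    calc ‖∫ x in S, u (x + V τ) τ‖ ≤ ∫ x in S, g τ := by
          refine norm_integral_le_of_norm_le ((integrableOn_const_iff).mpr (Or.inr hSfin))
            (ae_of_all _ fun x => hg τ hτT _)
      _ = m * g τ := by rw [setIntegral_const, smul_eq_mul, measureReal_def]
  have hFint : ∀ (V : ℝ → EuclideanSpace ℝ (Fin 3)), Continuous V →
      IntegrableOn (fun τ => ∫ x in S, u (x + V τ) τ) (Set.Icc (0:ℝ) t) := by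
    intro V hVc
    refine Integrable.mono' (g := fun τ => m * g τ) (hgL1t.const_mul m)
      (hsm V hVc).aestronglyMeasurable
      ((ae_restrict_iff' measurableSet_Icc).mpr (ae_of_all _ (hFbound V)))
  have hF1int : IntegrableOn F1 (Set.Icc (0:ℝ) t) := hFint V1 hV1c
  have hF2int : IntegrableOn F2 (Set.Icc (0:ℝ) t) := hFint V2 hV2c
  -- key pointwise estimate
  have hkey : ∀ τ ∈ Set.Icc (0:ℝ) t, ‖F1 τ - F2 τ‖ ≤ C * M * g τ := by
    intro τ hτ
    have hτT0 : τ ∈ Set.Icc (0:ℝ) T0 := ⟨hτ.1, le_trans hτ.2 htT0⟩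
    have hτT : τ ∈ Set.Icc (0:ℝ) T := ⟨hτ.1, le_trans hτ.2 htT⟩
    have hgτ : 0 ≤ g τ := hgnn τ hτT
    set a := w1 τ with hadef
    set b := w2 τ with hbdef
    have habM : ‖a - b‖ ≤ M := hM τ hτT0
    have habh0 : ‖a - b‖ ≤ h0 := by
      have : a - b = (a - z0) - (b - z0) := by abel
      rw [this]
      calc ‖(a - z0) - (b - z0)‖ ≤ ‖a - z0‖ + ‖b - z0‖ := norm_sub_le _ _
        _ ≤ h0 / 2 + h0 / 2 := add_le_add (hb1 τ hτT0) (hb2 τ hτT0)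
        _ = h0 := by ring
    set A := (fun y => y + a) '' S with hAdef
    set B := (fun y => y + b) '' S with hBdef
    have hA : MeasurableSet A := meas_img_aux a hSm
    have hB : MeasurableSet B := meas_img_aux b hSm
    have hAfin : volume A < ⊤ := by rw [hAdef, vol_img_aux a S hSm]; exact hSfin
    have hBfin : volume B < ⊤ := by rw [hBdef, vol_img_aux b S hSm]; exact hSfin
    have hum : Measurable fun x => u x τ := hu.comp (measurable_id.prodMk measurable_const)
    have hIA : IntegrableOn (fun x => u x τ) A :=
      Integrable.mono' ((integrableOn_const_iff).mpr (Or.inr hAfin)) hum.aestronglyMeasurable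
        (ae_of_all _ fun x => hg τ hτT x)
    have hIB : IntegrableOn (fun x => u x τ) B :=
      Integrable.mono' ((integrableOn_const_iff).mpr (Or.inr hBfin)) hum.aestronglyMeasurable
        (ae_of_all _ fun x => hg τ hτT x)
    -- rewrite F as integrals over translated sets
    have hF1τ : F1 τ = ∫ x in A, u x τ := by
      rw [hF1def]
      simp only [hV1eq τ hτT0]
      exact ((measurePreserving_add_right volume a).setIntegral_image_emb
        (MeasurableEquiv.addRight a).measurableEmbedding (fun x => u x τ) S).symm
    have hF2τ : F2 τ = ∫ x in B, u x τ := by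
      rw [hF2def]
      simp only [hV2eq τ hτT0]
      exact ((measurePreserving_add_right volume b).setIntegral_image_emb
        (MeasurableEquiv.addRight b).measurableEmbedding (fun x => u x τ) S).symm
    -- split off the common part
    have hsplit : F1 τ - F2 τ = (∫ x in A \ B, u x τ) - ∫ x in B \ A, u x τ := by
      rw [hF1τ, hF2τ, ← integral_inter_add_diff hB hIA, ← integral_inter_add_diff hA hIB,
        Set.inter_comm B A]
      abel
    -- volume of the symmetric difference
    have hdAB : volume (A \ B) ≠ ⊤ := (lt_of_le_of_lt (measure_mono Set.diff_subset) hAfin).ne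
    have hdBA : volume (B \ A) ≠ ⊤ := (lt_of_le_of_lt (measure_mono Set.diff_subset) hBfin).ne
    have hsd : volume (symmDiff A B) ≤ ENNReal.ofReal (C * ‖a - b‖) := by
      rw [hAdef, hBdef, symmdiff_translate_aux S hSm a b]
      have : ‖b - a‖ ≤ h0 := by rwa [norm_sub_rev]
      calc volume (symmDiff S ((fun x => x + (b - a)) '' S)) ≤
          ENNReal.ofReal (C * ‖b - a‖) := shift_bound_aux S hSm C h0 hC hh0 hshift _ this
        _ = ENNReal.ofReal (C * ‖a - b‖) := by rw [norm_sub_rev]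
    have hsd_eq : volume (symmDiff A B) = volume (A \ B) + volume (B \ A) := by
      rw [Set.symmDiff_def]
      exact measure_union (disjoint_sdiff_sdiff) (hB.diff hA)
    have hsum : (volume (A \ B)).toReal + (volume (B \ A)).toReal ≤ C * ‖a - b‖ := by
      rw [← ENNReal.toReal_add hdAB hdBA, ← hsd_eq]
      exact ENNReal.toReal_le_of_le_ofReal (by positivity) hsd
    -- estimate the difference
    have hn1 : ‖∫ x in A \ B, u x τ‖ ≤ (volume (A \ B)).toReal * g τ := by
      calc ‖∫ x in A \ B, u x τ‖ ≤ ∫ _x in A \ B, g τ :=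
            norm_integral_le_of_norm_le
              ((integrableOn_const_iff).mpr (Or.inr (lt_of_le_of_lt (measure_mono Set.diff_subset) hAfin)))
              (ae_of_all _ fun x => hg τ hτT x)
        _ = (volume (A \ B)).toReal * g τ := by rw [setIntegral_const, smul_eq_mul, measureReal_def]
    have hn2 : ‖∫ x in B \ A, u x τ‖ ≤ (volume (B \ A)).toReal * g τ := by
      calc ‖∫ x in B \ A, u x τ‖ ≤ ∫ _x in B \ A, g τ :=
            norm_integral_le_of_norm_le
              ((integrableOn_const_iff).mpr (Or.inr (lt_of_le_of_lt (measure_mono Set.diff_subset) hBfin)))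
              (ae_of_all _ fun x => hg τ hτT x)
        _ = (volume (B \ A)).toReal * g τ := by rw [setIntegral_const, smul_eq_mul, measureReal_def]
    calc ‖F1 τ - F2 τ‖ = ‖(∫ x in A \ B, u x τ) - ∫ x in B \ A, u x τ‖ := by rw [hsplit]
      _ ≤ ‖∫ x in A \ B, u x τ‖ + ‖∫ x in B \ A, u x τ‖ := norm_sub_le _ _
      _ ≤ (volume (A \ B)).toReal * g τ + (volume (B \ A)).toReal * g τ := add_le_add hn1 hn2
      _ = ((volume (A \ B)).toReal + (volume (B \ A)).toReal) * g τ := by ring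
      _ ≤ (C * ‖a - b‖) * g τ := mul_le_mul_of_nonneg_right hsum hgτ
      _ ≤ C * M * g τ := mul_le_mul_of_nonneg_right (mul_le_mul_of_nonneg_left habM hC.le) hgτ
  -- rewrite the inner set integrals in the goal
  have hrw1 : (∫ τ in Set.Icc (0:ℝ) t, ∫ x in (fun y => y + w1 τ) '' S, u x τ) =
      ∫ τ in Set.Icc (0:ℝ) t, F1 τ := by
    refine setIntegral_congr_fun measurableSet_Icc fun τ hτ => ?_
    have hτT0 : τ ∈ Set.Icc (0:ℝ) T0 := ⟨hτ.1, le_trans hτ.2 htT0⟩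
    rw [hF1def]
    simp only [hV1eq τ hτT0]
    exact (measurePreserving_add_right volume (w1 τ)).setIntegral_image_emb
      (MeasurableEquiv.addRight (w1 τ)).measurableEmbedding _ S
  have hrw2 : (∫ τ in Set.Icc (0:ℝ) t, ∫ x in (fun y => y + w2 τ) '' S, u x τ) =
      ∫ τ in Set.Icc (0:ℝ) t, F2 τ := by
    refine setIntegral_congr_fun measurableSet_Icc fun τ hτ => ?_
    have hτT0 : τ ∈ Set.Icc (0:ℝ) T0 := ⟨hτ.1, le_trans hτ.2 htT0⟩
    rw [hF2def]
    simp only [hV2eq τ hτT0]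
    exact (measurePreserving_add_right volume (w2 τ)).setIntegral_image_emb
      (MeasurableEquiv.addRight (w2 τ)).measurableEmbedding _ S
  rw [hrw1, hrw2]
  have hnorm : ‖(z0 + m⁻¹ • ∫ τ in Set.Icc (0:ℝ) t, F1 τ) -
      (z0 + m⁻¹ • ∫ τ in Set.Icc (0:ℝ) t, F2 τ)‖ =
      m⁻¹ * ‖(∫ τ in Set.Icc (0:ℝ) t, F1 τ) - ∫ τ in Set.Icc (0:ℝ) t, F2 τ‖ := by
    rw [add_sub_add_left_eq_sub, ← smul_sub, norm_smul, Real.norm_eq_abs,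
      abs_of_pos (inv_pos.mpr hm)]
  rw [hnorm]
  -- main estimate on the time integral
  have hstep : ‖(∫ τ in Set.Icc (0:ℝ) t, F1 τ) - ∫ τ in Set.Icc (0:ℝ) t, F2 τ‖ ≤
      C * M * ∫ τ in Set.Icc (0:ℝ) t, g τ := by
    rw [← integral_sub hF1int hF2int]
    calc ‖∫ τ in Set.Icc (0:ℝ) t, (F1 τ - F2 τ)‖ ≤ ∫ τ in Set.Icc (0:ℝ) t, C * M * g τ :=
          norm_integral_le_of_norm_le (hgL1t.const_mul (C * M))
            ((ae_restrict_iff' measurableSet_Icc).mpr (ae_of_all _ hkey))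
      _ = C * M * ∫ τ in Set.Icc (0:ℝ) t, g τ := integral_const_mul _ _
  have hcs : ∫ τ in Set.Icc (0:ℝ) t, g τ ≤
      Real.sqrt t * Real.sqrt (∫ τ in Set.Icc (0:ℝ) t, (g τ)^2) :=
    cs_aux g hgm t ht0 (fun τ hτ => hgnn τ ⟨hτ.1, le_trans hτ.2 htT⟩) hgL2t
  have hmono : (∫ τ in Set.Icc (0:ℝ) t, (g τ)^2) ≤ I := by
    rw [hIdef]
    exact setIntegral_mono_set hgL2 (ae_of_all _ fun τ => sq_nonneg _)
      (HasSubset.Subset.eventuallyLE (Set.Icc_subset_Icc_right htT))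
  have hcs2 : ∫ τ in Set.Icc (0:ℝ) t, g τ ≤ Real.sqrt T0 * Real.sqrt I := by
    calc ∫ τ in Set.Icc (0:ℝ) t, g τ ≤
        Real.sqrt t * Real.sqrt (∫ τ in Set.Icc (0:ℝ) t, (g τ)^2) := hcs
      _ ≤ Real.sqrt T0 * Real.sqrt I :=
          mul_le_mul (Real.sqrt_le_sqrt htT0) (Real.sqrt_le_sqrt hmono)
            (Real.sqrt_nonneg _) (Real.sqrt_nonneg _)
  have hgint_nn : 0 ≤ ∫ τ in Set.Icc (0:ℝ) t, g τ := by
    refine setIntegral_nonneg measurableSet_Icc fun τ hτ => hgnn τ ⟨hτ.1, le_trans hτ.2 htT⟩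
  calc m⁻¹ * ‖(∫ τ in Set.Icc (0:ℝ) t, F1 τ) - ∫ τ in Set.Icc (0:ℝ) t, F2 τ‖
      ≤ m⁻¹ * (C * M * ∫ τ in Set.Icc (0:ℝ) t, g τ) := by
        exact mul_le_mul_of_nonneg_left hstep (inv_nonneg.mpr hm.le)
    _ ≤ m⁻¹ * (C * M * (Real.sqrt T0 * Real.sqrt I)) := by
        refine mul_le_mul_of_nonneg_left ?_ (inv_nonneg.mpr hm.le)
        exact mul_le_mul_of_nonneg_left hcs2 (by positivity)
    _ = C * Real.sqrt T0 / m * Real.sqrt I * M := by ring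
end
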